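/- arXiv:1606.00182 — 4 statements merged into one kernel-verified Lean document; each statement's English description precedes it below -/
import Mathlib

section
/- Let X = {x_1, ..., x_N} be a finite collection of real numbers with x_i ∈ [0,1] for all i, and let μ = (1/N)·Σ_{i=1}^N x_i. If X_1, ..., X_n is a sample drawn uniformly at random from X without replacement, then for every ε > 0, Pr(|(1/n)·Σ_{t=1}^n X_t − μ| ≥ ε) ≤ 2·exp(−2nε²). -/
open Finset

lemma hoeff_core (p q : ℝ) (hp : 0 ≤ p) (hq : 0 ≤ q) (hpq : p + q = 1) (u : ℝ) :
    p + q * Real.exp u ≤ Real.exp (q * u + u ^ 2 / 8) := by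
  rcases eq_or_lt_of_le hq with hq0 | hq0
  · have hp1 : p = 1 := by linarith
    rw [hp1, ← hq0]
    simpa using Real.one_le_exp (by positivity)
  rcases eq_or_lt_of_le hp with hp0 | hp0
  · have hq1 : q = 1 := by linarith
    rw [← hp0, hq1, zero_add, one_mul, one_mul]
    exact Real.exp_le_exp.2 (by nlinarith [sq_nonneg u])
  -- main case 0 < p, 0 < q
  have hD : ∀ v : ℝ, 0 < p + q * Real.exp v := fun v => by positivity
  set F : ℝ → ℝ := fun v => q * v + v ^ 2 / 8 - Real.log (p + q * Real.exp v) with hFdef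
  set G : ℝ → ℝ := fun v => q + v / 4 - q * Real.exp v / (p + q * Real.exp v) with hGdef
  have hDer : ∀ v : ℝ, HasDerivAt (fun w => p + q * Real.exp w) (q * Real.exp v) v :=
    fun v => ((Real.hasDerivAt_exp v).const_mul q).const_add p
  have hF : ∀ v : ℝ, HasDerivAt F (G v) v := by
    intro v
    have h2 := (hDer v).log (ne_of_gt (hD v))
    have h3 : HasDerivAt (fun w : ℝ => q * w + w ^ 2 / 8) (q + v / 4) v := by
      have := ((hasDerivAt_id v).const_mul q).add ((hasDerivAt_pow 2 v).div_const 8)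
      exact this.congr_deriv (by norm_num; ring)
    exact h3.sub h2
  have hG : ∀ v : ℝ, HasDerivAt G
      (1 / 4 - (q * Real.exp v * (p + q * Real.exp v) - q * Real.exp v * (q * Real.exp v)) /
        (p + q * Real.exp v) ^ 2) v := by
    intro v
    have h2 := ((Real.hasDerivAt_exp v).const_mul q).div (hDer v) (ne_of_gt (hD v))
    have h3 : HasDerivAt (fun w : ℝ => q + w / 4) (1 / 4) v := by
      simpa using ((hasDerivAt_id v).div_const 4).const_add q
    exact h3.sub h2
  have hGd : ∀ v : ℝ, 0 ≤ 1 / 4 - (q * Real.exp v * (p + q * Real.exp v) -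
      q * Real.exp v * (q * Real.exp v)) / (p + q * Real.exp v) ^ 2 := by
    intro v
    rw [sub_nonneg, div_le_iff₀ (by positivity)]
    nlinarith [sq_nonneg (p - q * Real.exp v), Real.exp_pos v]
  have hGmono : Monotone G := by
    apply monotone_of_deriv_nonneg
    · exact fun v => (hG v).differentiableAt
    · intro v
      rw [(hG v).deriv]
      exact hGd v
  have hFcont : Continuous F := by
    have : Differentiable ℝ F := fun v => (hF v).differentiableAt
    exact this.continuous
  have hG0 : G 0 = 0 := by simp [hGdef, hpq]
  have hF0 : F 0 = 0 := by simp [hFdef, hpq]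
  have key : 0 ≤ F u := by
    rcases le_or_gt 0 u with hv | hv
    · have hm := monotoneOn_of_deriv_nonneg (convex_Icc 0 u) hFcont.continuousOn
        (fun w _ => (hF w).differentiableAt.differentiableWithinAt)
        (fun w hw => by
          rw [(hF w).deriv, ← hG0]
          rw [interior_Icc] at hw
          exact hGmono hw.1.le)
      have := hm (Set.left_mem_Icc.2 hv) (Set.right_mem_Icc.2 hv) hv
      linarith [hF0 ▸ this]
    · have hm := antitoneOn_of_deriv_nonpos (convex_Icc u 0) hFcont.continuousOn
        (fun w _ => (hF w).differentiableAt.differentiableWithinAt)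
        (fun w hw => by
          rw [(hF w).deriv, ← hG0]
          rw [interior_Icc] at hw
          exact hGmono hw.2.le)
      have := hm (Set.left_mem_Icc.2 hv.le) (Set.right_mem_Icc.2 hv.le) hv.le
      linarith [hF0 ▸ this]
  have : Real.log (p + q * Real.exp u) ≤ q * u + u ^ 2 / 8 := by
    have := key
    simp only [hFdef] at this
    linarith
  calc p + q * Real.exp u = Real.exp (Real.log (p + q * Real.exp u)) :=
        (Real.exp_log (hD u)).symm
    _ ≤ Real.exp (q * u + u ^ 2 / 8) := Real.exp_le_exp.2 this


lemma hoeff_discrete {ι : Type*} [Fintype ι] [Nonempty ι] (y : ι → ℝ) (a b : ℝ)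
    (hab : b - a ≤ 1) (hy : ∀ i, y i ∈ Set.Icc a b) (hsum : ∑ i, y i = 0) (t : ℝ) :
    ∑ i, Real.exp (t * y i) ≤ (Fintype.card ι : ℝ) * Real.exp (t ^ 2 / 8) := by
  obtain ⟨i0⟩ := ‹Nonempty ι›
  have hM : 0 < (Fintype.card ι : ℝ) := by
    have := Fintype.card_pos (α := ι); positivity
  have ha0 : a ≤ 0 := by
    by_contra h
    push_neg at h
    have : 0 < ∑ i, y i :=
      Finset.sum_pos (fun i _ => lt_of_lt_of_le h (hy i).1) ⟨i0, mem_univ i0⟩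
    linarith
  have hb0 : 0 ≤ b := by
    by_contra h
    push_neg at h
    have : ∑ i, y i < 0 :=
      Finset.sum_neg (fun i _ => lt_of_le_of_lt (hy i).2 h) ⟨i0, mem_univ i0⟩
    linarith
  rcases lt_or_ge a b with hlt | hge
  · -- main case a < b
    have hba : 0 < b - a := by linarith
    set p : ℝ := b / (b - a) with hp
    set q : ℝ := -a / (b - a) with hq
    have hp0 : 0 ≤ p := by positivity
    have hq0 : 0 ≤ q := div_nonneg (by linarith) hba.le
    have hpq : p + q = 1 := by rw [hp, hq]; field_simp; ring
    have point : ∀ i, Real.exp (t * y i) ≤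
        ((b - y i) * Real.exp (t * a) + (y i - a) * Real.exp (t * b)) / (b - a) := by
      intro i
      have h1 : (0:ℝ) ≤ (b - y i) / (b - a) := div_nonneg (by linarith [(hy i).2]) hba.le
      have h2 : (0:ℝ) ≤ (y i - a) / (b - a) := div_nonneg (by linarith [(hy i).1]) hba.le
      have h3 : (b - y i) / (b - a) + (y i - a) / (b - a) = 1 := by field_simp; ring
      have hcx := convexOn_exp.2 (Set.mem_univ (t * a)) (Set.mem_univ (t * b)) h1 h2 h3
      simp only [smul_eq_mul] at hcx
      have harg : (b - y i) / (b - a) * (t * a) + (y i - a) / (b - a) * (t * b) = t * y i := by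
        field_simp
        ring
      rw [harg] at hcx
      calc Real.exp (t * y i) ≤ (b - y i) / (b - a) * Real.exp (t * a) +
            (y i - a) / (b - a) * Real.exp (t * b) := hcx
        _ = ((b - y i) * Real.exp (t * a) + (y i - a) * Real.exp (t * b)) / (b - a) := by ring
    have step1 : ∑ i, Real.exp (t * y i) ≤
        (Fintype.card ι : ℝ) * (p * Real.exp (t * a) + q * Real.exp (t * b)) := by
      have hsumeq : ∑ i, ((b - y i) * Real.exp (t * a) + (y i - a) * Real.exp (t * b)) / (b - a)
          = (Fintype.card ι : ℝ) * (p * Real.exp (t * a) + q * Real.exp (t * b)) := by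
        rw [← Finset.sum_div, Finset.sum_add_distrib, ← Finset.sum_mul, ← Finset.sum_mul,
          Finset.sum_sub_distrib, Finset.sum_sub_distrib, hsum]
        simp only [Finset.sum_const, Finset.card_univ, nsmul_eq_mul, mul_one, sub_zero, zero_sub]
        rw [hp, hq]
        field_simp
      calc ∑ i, Real.exp (t * y i)
          ≤ ∑ i, ((b - y i) * Real.exp (t * a) + (y i - a) * Real.exp (t * b)) / (b - a) :=
            Finset.sum_le_sum fun i _ => point i
        _ = _ := hsumeq
    have step2 : p * Real.exp (t * a) + q * Real.exp (t * b) ≤ Real.exp (t ^ 2 / 8) := by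
      have hu := hoeff_core p q hp0 hq0 hpq (t * (b - a))
      have he : Real.exp (t * b) = Real.exp (t * a) * Real.exp (t * (b - a)) := by
        rw [← Real.exp_add]; ring_nf
      have hrw : p * Real.exp (t * a) + q * Real.exp (t * b) =
          Real.exp (t * a) * (p + q * Real.exp (t * (b - a))) := by
        rw [he]; ring
      rw [hrw]
      calc Real.exp (t * a) * (p + q * Real.exp (t * (b - a)))
          ≤ Real.exp (t * a) * Real.exp (q * (t * (b - a)) + (t * (b - a)) ^ 2 / 8) :=
            mul_le_mul_of_nonneg_left hu (Real.exp_pos _).le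
        _ = Real.exp (t * a + (q * (t * (b - a)) + (t * (b - a)) ^ 2 / 8)) :=
            (Real.exp_add _ _).symm
        _ ≤ Real.exp (t ^ 2 / 8) := by
            apply Real.exp_le_exp.2
            have h1 : t * a + q * (t * (b - a)) = 0 := by
              rw [hq]; field_simp; ring
            have h2 : (t * (b - a)) ^ 2 ≤ t ^ 2 := by
              have hb1 : (b - a) ^ 2 ≤ 1 := by nlinarith
              calc (t * (b - a)) ^ 2 = t ^ 2 * (b - a) ^ 2 := by ring
                _ ≤ t ^ 2 * 1 := by nlinarith [sq_nonneg t]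
                _ = t ^ 2 := by ring
            linarith
    calc ∑ i, Real.exp (t * y i)
        ≤ (Fintype.card ι : ℝ) * (p * Real.exp (t * a) + q * Real.exp (t * b)) := step1
      _ ≤ (Fintype.card ι : ℝ) * Real.exp (t ^ 2 / 8) :=
          mul_le_mul_of_nonneg_left step2 hM.le
  · -- degenerate: a = b, all y i = 0
    have hab' : a = b := le_antisymm (le_trans ha0 hb0) hge
    have ha' : a = 0 := le_antisymm ha0 (hab' ▸ hb0)
    have hzero : ∀ i, y i = 0 := fun i =>
      le_antisymm (by linarith [(hy i).2]) (by linarith [(hy i).1])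
    simp only [hzero, mul_zero, Real.exp_zero]
    simp only [Finset.sum_const, Finset.card_univ, nsmul_eq_mul, mul_one]
    exact le_mul_of_one_le_right hM.le (Real.one_le_exp (by positivity))

def embSuccEquiv (k M : ℕ) :
    (Fin (k + 1) ↪ Fin M) ≃ (Σ j : Fin M, (Fin k ↪ {i : Fin M // i ≠ j})) where
  toFun σ := ⟨σ 0, ⟨fun s => ⟨σ s.succ, fun h => Fin.succ_ne_zero s (σ.injective h)⟩,
      fun s s' h => Fin.succ_injective _ (σ.injective (congrArg Subtype.val h))⟩⟩
  invFun p := ⟨Fin.cons p.1 (fun s => (p.2 s).val), by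
    intro s s' h
    induction s using Fin.cases with
    | zero =>
      induction s' using Fin.cases with
      | zero => rfl
      | succ s' =>
        simp only [Fin.cons_zero, Fin.cons_succ] at h
        exact absurd h.symm (p.2 s').2
    | succ s =>
      induction s' using Fin.cases with
      | zero =>
        simp only [Fin.cons_zero, Fin.cons_succ] at h
        exact absurd h (p.2 s).2
      | succ s' =>
        simp only [Fin.cons_succ] at h
        exact congrArg Fin.succ (p.2.injective (Subtype.ext h))⟩
  left_inv σ := by
    ext s
    induction s using Fin.cases with
    | zero => rfl
    | succ s => rfl
  right_inv p := by
    rcases p with ⟨j, τ⟩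
    simp only [Function.Embedding.coeFn_mk, Fin.cons_zero, Fin.cons_succ]
    congr 1

lemma mgf_bound : ∀ (k M : ℕ), k ≤ M → ∀ (x : Fin M → ℝ), (∀ i, x i ∈ Set.Icc (0:ℝ) 1) →
    ∀ t : ℝ,
    ∑ σ : Fin k ↪ Fin M, Real.exp (t * ((∑ s, x (σ s)) - k * ((∑ i, x i) / M)))
      ≤ (Fintype.card (Fin k ↪ Fin M) : ℝ) * Real.exp (k * t ^ 2 / 8) := by
  intro k
  induction k with
  | zero =>
    intro M hkM x hx t
    simp
  | succ k ih =>
    intro M hkM x hx t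
    obtain ⟨m, rfl⟩ : ∃ m, M = m + 1 := ⟨M - 1, by omega⟩
    have hkm : k ≤ m := by omega
    set Sx : ℝ := ∑ i, x i with hSx
    set μ : ℝ := Sx / (m + 1 : ℕ) with hμ
    set α : ℝ := 1 - (k : ℝ) / m with hα
    set C : ℝ := k * Sx / m - (k + 1 : ℕ) * μ with hC
    set g : Fin (m+1) → ℝ := fun j => α * x j + C with hg
    -- rewrite LHS via the sigma equivalence
    have main_eq : ∑ σ : Fin (k+1) ↪ Fin (m+1),
        Real.exp (t * ((∑ s, x (σ s)) - (k+1 : ℕ) * μ))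
        = ∑ j : Fin (m+1), Real.exp (t * g j) *
            ∑ ρ : Fin k ↪ Fin m,
              Real.exp (t * ((∑ s, x (j.succAbove (ρ s))) -
                k * ((∑ s : Fin m, x (j.succAbove s)) / m))) := by
      rw [← Equiv.sum_comp (embSuccEquiv k (m+1)).symm
        (fun σ => Real.exp (t * ((∑ s, x (σ s)) - (k+1 : ℕ) * μ)))]
      rw [← Finset.univ_sigma_univ, Finset.sum_sigma]
      congr 1
      ext j
      -- reindex inner sum over embeddings into the subtype
      rw [← Equiv.sum_comp (Equiv.embeddingCongr (Equiv.refl (Fin k)) (finSuccAboveEquiv j))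
        (fun τ : Fin k ↪ {i : Fin (m+1) // i ≠ j} =>
          Real.exp (t * ((∑ s : Fin (k+1),
            x ((embSuccEquiv k (m+1)).symm ⟨j, τ⟩ s)) - (k+1 : ℕ) * μ)))]
      rw [Finset.mul_sum]
      congr 1
      ext ρ
      have hcoe : ∀ s : Fin (k+1),
          ((embSuccEquiv k (m+1)).symm
            ⟨j, Equiv.embeddingCongr (Equiv.refl (Fin k)) (finSuccAboveEquiv j) ρ⟩) s
          = (Fin.cons j (fun s' => j.succAbove (ρ s')) : Fin (k+1) → Fin (m+1)) s := by
        intro s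
        induction s using Fin.cases with
        | zero => rfl
        | succ s => rfl
      simp only [hcoe]
      rw [Fin.sum_univ_succ]
      simp only [Fin.cons_zero, Fin.cons_succ]
      rw [← Real.exp_add]
      congr 1
      -- algebraic identity
      have hsum' : (∑ s : Fin m, x (j.succAbove s)) = Sx - x j := by
        have h := Fin.sum_univ_succAbove x j
        rw [hSx]
        linarith
      rw [hsum', hg, hα, hC]
      push_cast
      ring
    rw [main_eq]
    -- apply the induction hypothesis to each inner sum
    have hxs : ∀ j : Fin (m+1), ∀ i : Fin m, x (j.succAbove i) ∈ Set.Icc (0:ℝ) 1 :=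
      fun j i => hx _
    have step1 : ∑ j : Fin (m+1), Real.exp (t * g j) *
            ∑ ρ : Fin k ↪ Fin m,
              Real.exp (t * ((∑ s, x (j.succAbove (ρ s))) -
                k * ((∑ s : Fin m, x (j.succAbove s)) / m)))
        ≤ ∑ j : Fin (m+1), Real.exp (t * g j) *
            ((Fintype.card (Fin k ↪ Fin m) : ℝ) * Real.exp (k * t ^ 2 / 8)) := by
      apply Finset.sum_le_sum
      intro j _
      exact mul_le_mul_of_nonneg_left
        (ih m hkm (fun s => x (j.succAbove s)) (hxs j) t) (Real.exp_pos _).le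
    -- bound the outer sum with the discrete Hoeffding lemma
    have halpha0 : 0 ≤ α := by
      rcases Nat.eq_zero_or_pos m with hm | hm
      · have hk0 : k = 0 := by omega
        simp [hα, hk0, hm]
      · rw [hα, sub_nonneg]
        rw [div_le_one (by exact_mod_cast hm)]
        exact_mod_cast hkm
    have halpha1 : α ≤ 1 := by
      rw [hα]
      have : (0:ℝ) ≤ (k : ℝ) / m := by positivity
      linarith
    have hgsum : ∑ j : Fin (m+1), g j = 0 := by
      simp only [hg]
      rw [Finset.sum_add_distrib, ← Finset.mul_sum, ← hSx]
      simp only [Finset.sum_const, Finset.card_univ, Fintype.card_fin, nsmul_eq_mul]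
      rcases Nat.eq_zero_or_pos k with hk | hk
      · subst hk
        rw [hα, hC, hμ]
        push_cast
        have hm1 : ((m:ℝ) + 1) ≠ 0 := by positivity
        field_simp
        ring
      · have hm : (m : ℝ) ≠ 0 := by
          have : 0 < m := by omega
          positivity
        rw [hα, hC, hμ]
        have hm1 : ((m:ℝ) + 1) ≠ 0 := by positivity
        push_cast
        field_simp
        ring
    have step2 : ∑ j : Fin (m+1), Real.exp (t * g j)
        ≤ ((m : ℝ) + 1) * Real.exp (t ^ 2 / 8) := by
      have := hoeff_discrete g C (C + α) (by linarith)
        (fun j => ⟨by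
            have := (hx j).1
            simp only [hg]
            nlinarith, by
            have h1 := (hx j).2
            have h0 := (hx j).1
            simp only [hg]
            nlinarith⟩)
        hgsum t
      simpa [Fintype.card_fin] using this
    have hcard : (Fintype.card (Fin (k+1) ↪ Fin (m+1)) : ℝ)
        = ((m : ℝ) + 1) * (Fintype.card (Fin k ↪ Fin m) : ℝ) := by
      rw [Fintype.card_embedding_eq, Fintype.card_embedding_eq]
      simp only [Fintype.card_fin]
      rw [Nat.succ_descFactorial_succ]
      push_cast
      ring
    calc ∑ j : Fin (m+1), Real.exp (t * g j) *
            ∑ ρ : Fin k ↪ Fin m,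
              Real.exp (t * ((∑ s, x (j.succAbove (ρ s))) -
                k * ((∑ s : Fin m, x (j.succAbove s)) / m)))
        ≤ ∑ j : Fin (m+1), Real.exp (t * g j) *
            ((Fintype.card (Fin k ↪ Fin m) : ℝ) * Real.exp (k * t ^ 2 / 8)) := step1
      _ = (∑ j : Fin (m+1), Real.exp (t * g j)) *
            ((Fintype.card (Fin k ↪ Fin m) : ℝ) * Real.exp (k * t ^ 2 / 8)) := by
          rw [← Finset.sum_mul]
      _ ≤ (((m : ℝ) + 1) * Real.exp (t ^ 2 / 8)) *
            ((Fintype.card (Fin k ↪ Fin m) : ℝ) * Real.exp (k * t ^ 2 / 8)) := by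
          apply mul_le_mul_of_nonneg_right step2
          positivity
      _ = (Fintype.card (Fin (k+1) ↪ Fin (m+1)) : ℝ) * Real.exp ((k+1 : ℕ) * t ^ 2 / 8) := by
          rw [hcard, show ((k+1:ℕ):ℝ) * t ^ 2 / 8 = t ^ 2 / 8 + (k:ℝ) * t ^ 2 / 8 by
            push_cast; ring, Real.exp_add]
          ring

/-- **Hoeffding's inequality for sampling without replacement.**
`x : Fin N → ℝ` is a finite collection of numbers in `[0,1]` with mean `μ`.
A sample of size `n` drawn uniformly at random without replacement is modeled as a
uniformly random injection `σ : Fin n ↪ Fin N`; the probability of an event is the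
fraction of injections realizing it.  Then for every `ε > 0`,
`Pr(|(1/n)∑ x (σ t) − μ| ≥ ε) ≤ 2 exp(−2 n ε²)`. -/
theorem hoeffding_sampling_without_replacement
    (N n : ℕ) (hn : 1 ≤ n) (hnN : n ≤ N)
    (x : Fin N → ℝ) (hx : ∀ i, x i ∈ Set.Icc (0 : ℝ) 1)
    (ε : ℝ) (hε : 0 < ε) :
    (Nat.card {σ : Fin n ↪ Fin N //
        ε ≤ |(∑ t, x (σ t)) / n - (∑ i, x i) / N|} : ℝ) /
      (Nat.card (Fin n ↪ Fin N) : ℝ)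
      ≤ 2 * Real.exp (-2 * n * ε ^ 2) := by
  classical
  set S : (Fin n ↪ Fin N) → ℝ := fun σ => ∑ t, x (σ t) with hS
  set μ : ℝ := (∑ i, x i) / N with hμ
  have hn0 : (0:ℝ) < n := by exact_mod_cast hn
  set T : ℕ := Fintype.card (Fin n ↪ Fin N) with hT
  have hT0 : 0 < T := by
    rw [hT, Fintype.card_embedding_eq]
    simp only [Fintype.card_fin]
    exact Nat.pos_of_ne_zero fun h =>
      absurd (Nat.descFactorial_eq_zero_iff_lt.1 h) (not_lt.2 hnN)
  have hTR : (0:ℝ) < T := by exact_mod_cast hT0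
  set P : (Fin n ↪ Fin N) → Prop := fun σ => ε ≤ |S σ / n - μ| with hP
  set p1 : (Fin n ↪ Fin N) → Prop := fun σ => (n:ℝ) * ε ≤ S σ - n * μ with hp1
  set p2 : (Fin n ↪ Fin N) → Prop := fun σ => S σ - n * μ ≤ -((n:ℝ) * ε) with hp2
  -- generic Chernoff bound for one tail
  have tail : ∀ (p : (Fin n ↪ Fin N) → Prop) [DecidablePred p] (t c : ℝ),
      (∀ σ, p σ → c ≤ t * (S σ - n * μ)) →
      ((univ.filter p).card : ℝ) * Real.exp c
        ≤ (T : ℝ) * Real.exp (n * t ^ 2 / 8) := by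
    intro p _ t c hpt
    have h1 : ((univ.filter p).card : ℝ) * Real.exp c
        ≤ ∑ σ ∈ univ.filter p, Real.exp (t * (S σ - n * μ)) := by
      have := Finset.card_nsmul_le_sum (univ.filter p)
        (fun σ => Real.exp (t * (S σ - n * μ))) (Real.exp c)
        (fun σ hσ => Real.exp_le_exp.2 (hpt σ (Finset.mem_filter.1 hσ).2))
      simpa [nsmul_eq_mul] using this
    have h2 : ∑ σ ∈ univ.filter p, Real.exp (t * (S σ - n * μ))
        ≤ ∑ σ : Fin n ↪ Fin N, Real.exp (t * (S σ - n * μ)) :=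
      Finset.sum_le_sum_of_subset_of_nonneg (Finset.filter_subset _ _)
        (fun σ _ _ => (Real.exp_pos _).le)
    have h3 := mgf_bound n N hnN x hx t
    calc ((univ.filter p).card : ℝ) * Real.exp c
        ≤ ∑ σ ∈ univ.filter p, Real.exp (t * (S σ - n * μ)) := h1
      _ ≤ ∑ σ : Fin n ↪ Fin N, Real.exp (t * (S σ - n * μ)) := h2
      _ ≤ (T : ℝ) * Real.exp (n * t ^ 2 / 8) := h3
  -- tail 1 : t = 4ε
  have tail1 : ((univ.filter p1).card : ℝ) ≤ (T : ℝ) * Real.exp (-2 * n * ε ^ 2) := by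
    have h := tail p1 (4 * ε) ((n:ℝ) * ε * (4 * ε)) (fun σ hσ => by
      have : (n:ℝ) * ε ≤ S σ - n * μ := hσ
      nlinarith)
    have hexp : (0:ℝ) < Real.exp ((n:ℝ) * ε * (4 * ε)) := Real.exp_pos _
    rw [← le_div_iff₀ hexp] at h
    calc ((univ.filter p1).card : ℝ)
        ≤ (T : ℝ) * Real.exp ((n:ℝ) * (4 * ε) ^ 2 / 8) / Real.exp ((n:ℝ) * ε * (4 * ε)) := h
      _ = (T : ℝ) * Real.exp (-2 * n * ε ^ 2) := by
          rw [mul_div_assoc, ← Real.exp_sub]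
          congr 1
          ring
  -- tail 2 : t = -4ε
  have tail2 : ((univ.filter p2).card : ℝ) ≤ (T : ℝ) * Real.exp (-2 * n * ε ^ 2) := by
    have h := tail p2 (-(4 * ε)) ((n:ℝ) * ε * (4 * ε)) (fun σ hσ => by
      have : S σ - n * μ ≤ -((n:ℝ) * ε) := hσ
      nlinarith)
    have hexp : (0:ℝ) < Real.exp ((n:ℝ) * ε * (4 * ε)) := Real.exp_pos _
    rw [← le_div_iff₀ hexp] at h
    calc ((univ.filter p2).card : ℝ)
        ≤ (T : ℝ) * Real.exp ((n:ℝ) * (-(4 * ε)) ^ 2 / 8) / Real.exp ((n:ℝ) * ε * (4 * ε)) := h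
      _ = (T : ℝ) * Real.exp (-2 * n * ε ^ 2) := by
          rw [mul_div_assoc, ← Real.exp_sub]
          congr 1
          ring
  -- union bound
  have hsub : univ.filter P ⊆ univ.filter p1 ∪ univ.filter p2 := by
    intro σ hσ
    have hσ' : ε ≤ |S σ / n - μ| := (Finset.mem_filter.1 hσ).2
    rcases abs_cases (S σ / n - μ) with ⟨heq, _⟩ | ⟨heq, _⟩
    · apply Finset.mem_union_left
      rw [Finset.mem_filter]
      refine ⟨mem_univ _, ?_⟩
      rw [heq] at hσ'
      have : ε * n ≤ (S σ / n - μ) * n := by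
        exact mul_le_mul_of_nonneg_right hσ' hn0.le
      rw [sub_mul, div_mul_cancel₀ _ (ne_of_gt hn0)] at this
      show (n:ℝ) * ε ≤ S σ - n * μ
      linarith
    · apply Finset.mem_union_right
      rw [Finset.mem_filter]
      refine ⟨mem_univ _, ?_⟩
      rw [heq] at hσ'
      have : ε * n ≤ -(S σ / n - μ) * n := mul_le_mul_of_nonneg_right hσ' hn0.le
      rw [neg_mul, sub_mul, div_mul_cancel₀ _ (ne_of_gt hn0)] at this
      show S σ - n * μ ≤ -((n:ℝ) * ε)
      linarith
  have hcardP : (Nat.card {σ : Fin n ↪ Fin N // ε ≤ |S σ / n - μ|} : ℝ)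
      = ((univ.filter P).card : ℝ) := by
    rw [Nat.card_eq_fintype_card, Fintype.card_subtype]
  have hcardT : (Nat.card (Fin n ↪ Fin N) : ℝ) = (T : ℝ) := by
    rw [Nat.card_eq_fintype_card]
  rw [hcardP, hcardT, div_le_iff₀ hTR]
  calc ((univ.filter P).card : ℝ)
      ≤ ((univ.filter p1 ∪ univ.filter p2).card : ℝ) := by
        exact_mod_cast Finset.card_le_card hsub
    _ ≤ ((univ.filter p1).card : ℝ) + ((univ.filter p2).card : ℝ) := by
        exact_mod_cast Finset.card_union_le _ _
    _ ≤ (T : ℝ) * Real.exp (-2 * n * ε ^ 2) + (T : ℝ) * Real.exp (-2 * n * ε ^ 2) :=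
        add_le_add tail1 tail2
    _ = 2 * Real.exp (-2 * n * ε ^ 2) * T := by ring
end

section
/- Let N_1, ..., N_n be subsets of a finite set E, and let E_0 ⊆ E be sampled uniformly at random without replacement from E with |E_0| = m. Then for every δ ∈ (0,1), every Q > 0, and every θ ≥ 2·max{Q, 4·ln(n/δ)}, if |E| ≥ m ≥ (2|E|/θ)·max{Q, 4·ln(n/δ)}, then Pr(∃ i : |N_i| ≥ θ and |N_i ∩ E_0| < Q) ≤ δ. -/
open Finset

private lemma aux_bernoulli (x y : ℝ) (hx : 0 < x) (hy : 0 ≤ y) (m : ℕ) :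
    x ^ (m + 1) + (m + 1) * x ^ m * y ≤ (x + y) ^ (m + 1) := by
  have hxne : x ≠ 0 := ne_of_gt hx
  have hdiv : -2 ≤ y / x := le_trans (by norm_num) (div_nonneg hy hx.le)
  have h := one_add_mul_le_pow hdiv (m + 1)
  have h2 := mul_le_mul_of_nonneg_right h (pow_pos hx (m + 1)).le
  calc x ^ (m + 1) + (m + 1) * x ^ m * y
      = (1 + ((m : ℝ) + 1) * (y / x)) * x ^ (m + 1) := by
        field_simp
        ring
    _ ≤ (1 + y / x) ^ (m + 1) * x ^ (m + 1) := by
        convert h2 using 3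
        push_cast
        rfl
        push_cast
        ring
    _ = (x + y) ^ (m + 1) := by
        rw [← mul_pow]
        congr 1
        field_simp

private lemma step_ineq (c m t : ℕ) (z : ℝ) (hz0 : 0 < z) (hz1 : z ≤ 1) (htc : t ≤ c) :
    (c.choose (m + 1) : ℝ) * (1 - (1 - z) * t / c) ^ (m + 1)
      + (c.choose m : ℝ) * (1 - (1 - z) * t / c) ^ m
    ≤ ((c + 1).choose (m + 1) : ℝ) * (1 - (1 - z) * t / ((c : ℝ) + 1)) ^ (m + 1) := by
  rcases Nat.eq_zero_or_pos t with ht0 | htpos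
  · subst ht0
    simp only [Nat.cast_zero, mul_zero, zero_div, sub_zero, one_pow, mul_one]
    rw [Nat.choose_succ_succ c m]
    push_cast
    linarith
  have hcpos : 0 < c := lt_of_lt_of_le htpos htc
  have hcR : (0 : ℝ) < c := by exact_mod_cast hcpos
  have hc1R : (0 : ℝ) < (c : ℝ) + 1 := by linarith
  set β : ℝ := 1 - (1 - z) * t / c with hβdef
  set d : ℝ := (1 - z) * t / (c * ((c : ℝ) + 1)) with hddef
  have htcR : (t : ℝ) ≤ c := by exact_mod_cast htc
  have htR : (0 : ℝ) ≤ t := Nat.cast_nonneg t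
  have hzc : 0 ≤ 1 - z := by linarith
  have hβz : z ≤ β := by
    have h1 : (1 - z) * t / c ≤ (1 - z) * 1 := by
      rw [mul_div_assoc]
      apply mul_le_mul_of_nonneg_left _ hzc
      rw [div_le_one hcR]
      exact htcR
    rw [hβdef]
    linarith
  have hβpos : 0 < β := lt_of_lt_of_le hz0 hβz
  have hd : 0 ≤ d := by
    apply div_nonneg (mul_nonneg hzc htR)
    positivity
  have hBd : 1 - (1 - z) * t / ((c : ℝ) + 1) = β + d := by
    rw [hβdef, hddef]
    field_simp
    ring
  rw [hBd]
  by_cases hmc : m ≤ c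
  · have h1 : ((c : ℝ) + 1) * (c.choose m) = ((c + 1).choose (m + 1)) * ((m : ℝ) + 1) := by
      exact_mod_cast Nat.add_one_mul_choose_eq c m
    have hpascal : (((c + 1).choose (m + 1) : ℕ) : ℝ) = (c.choose m : ℝ) + (c.choose (m + 1) : ℝ) := by
      exact_mod_cast Nat.choose_succ_succ c m
    set Ch : ℝ := ((c + 1).choose (m + 1) : ℝ) with hCh
    have hChnn : 0 ≤ Ch := Nat.cast_nonneg _
    have e1 : (c.choose m : ℝ) = Ch * ((m : ℝ) + 1) / ((c : ℝ) + 1) := by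
      rw [eq_div_iff (ne_of_gt hc1R)]
      linarith [h1]
    have e2 : (c.choose (m + 1) : ℝ) = Ch * ((c : ℝ) - m) / ((c : ℝ) + 1) := by
      have : (c.choose (m + 1) : ℝ) = Ch - (c.choose m : ℝ) := by linarith [hpascal]
      rw [this, e1]
      field_simp
      ring
    have key : β ^ (m + 1) + ((m : ℝ) + 1) * β ^ m * d ≤ (β + d) ^ (m + 1) := by
      have := aux_bernoulli β d hβpos hd m
      convert this using 2
    have expand : ((c : ℝ) - m) / ((c : ℝ) + 1) * β ^ (m + 1) + ((m : ℝ) + 1) / ((c : ℝ) + 1) * β ^ m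
        = β ^ (m + 1) + ((m : ℝ) + 1) * β ^ m * d := by
      have hd' : d = (1 - β) / ((c : ℝ) + 1) := by
        rw [hβdef, hddef]
        field_simp
        ring
      rw [hd']
      field_simp
      ring
    calc (c.choose (m + 1) : ℝ) * β ^ (m + 1) + (c.choose m : ℝ) * β ^ m
        = Ch * (((c : ℝ) - m) / ((c : ℝ) + 1) * β ^ (m + 1) + ((m : ℝ) + 1) / ((c : ℝ) + 1) * β ^ m) := by
          rw [e1, e2]; ring
      _ = Ch * (β ^ (m + 1) + ((m : ℝ) + 1) * β ^ m * d) := by rw [expand]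
      _ ≤ Ch * (β + d) ^ (m + 1) := mul_le_mul_of_nonneg_left key hChnn
  · push_neg at hmc
    have hz1' : c.choose (m + 1) = 0 := Nat.choose_eq_zero_of_lt (by omega)
    have hz2' : c.choose m = 0 := Nat.choose_eq_zero_of_lt hmc
    rw [hz1', hz2']
    simp only [Nat.cast_zero, zero_mul, add_zero]
    apply mul_nonneg (Nat.cast_nonneg _)
    apply pow_nonneg
    linarith

private lemma mgf_bound_s2 {α : Type*} [DecidableEq α] (z : ℝ) (hz0 : 0 < z) (hz1 : z ≤ 1)
    (E : Finset α) : ∀ N : Finset α, N ⊆ E → ∀ m : ℕ,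
    ∑ S ∈ E.powersetCard m, z ^ (N ∩ S).card ≤
      (E.card.choose m : ℝ) * (1 - (1 - z) * N.card / E.card) ^ m := by
  induction E using Finset.strongInduction with
  | H E ih =>
    intro N hNE m
    by_cases hN0 : N = ∅
    · subst hN0
      simp [card_powersetCard]
    by_cases hNE' : N = E
    · subst hNE'
      have hc0 : (N.card : ℝ) ≠ 0 := by
        have : 0 < N.card := card_pos.2 (nonempty_of_ne_empty hN0)
        positivity
      have hterm : ∀ S ∈ N.powersetCard m, z ^ (N ∩ S).card = z ^ m := by
        intro S hS
        rw [mem_powersetCard] at hS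
        rw [inter_eq_right.2 hS.1, hS.2]
      rw [sum_congr rfl hterm, sum_const, card_powersetCard, nsmul_eq_mul]
      have hz' : 1 - (1 - z) * N.card / N.card = z := by field_simp; ring
      rw [hz']
    · obtain ⟨x, hxE, hxN⟩ := exists_of_ssubset (Finset.ssubset_iff_subset_ne.2 ⟨hNE, hNE'⟩)
      have hxE' : x ∉ E.erase x := notMem_erase _ _
      have hIE : insert x (E.erase x) = E := insert_erase hxE
      have hNE'' : N ⊆ E.erase x := subset_erase.2 ⟨hNE, hxN⟩
      have hssub : E.erase x ⊂ E := erase_ssubset hxE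
      cases m with
      | zero => simp
      | succ m =>
        have hdisj : Disjoint ((E.erase x).powersetCard (m + 1))
            (((E.erase x).powersetCard m).image (insert x)) := by
          rw [disjoint_left]
          intro S hS hS'
          obtain ⟨S', _, rfl⟩ := mem_image.1 hS'
          exact hxE' ((mem_powersetCard.1 hS).1 (mem_insert_self x S'))
        have himg : ∑ S ∈ ((E.erase x).powersetCard m).image (insert x), z ^ (N ∩ S).card
            = ∑ S' ∈ (E.erase x).powersetCard m, z ^ (N ∩ S').card := by
          rw [sum_image ?_]
          · apply sum_congr rfl
            intro S' _
            rw [inter_comm, insert_inter_of_notMem hxN, inter_comm]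
          · intro S hS T hT hST
            have hxS : x ∉ S := fun h => hxE' ((mem_powersetCard.1 hS).1 h)
            have hxT : x ∉ T := fun h => hxE' ((mem_powersetCard.1 hT).1 h)
            rw [← erase_insert hxS, ← erase_insert hxT, hST]
        have hcard : E.card = (E.erase x).card + 1 := by
          have h1 : (E.erase x).card = E.card - 1 := card_erase_of_mem hxE
          have h2 : 0 < E.card := card_pos.2 ⟨x, hxE⟩
          omega
        have ih1 := ih (E.erase x) hssub N hNE'' (m + 1)
        have ih2 := ih (E.erase x) hssub N hNE'' m
        have hstep := step_ineq (E.erase x).card m N.card z hz0 hz1 (card_le_card hNE'')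
        calc ∑ S ∈ E.powersetCard (m + 1), z ^ (N ∩ S).card
            = ∑ S ∈ (insert x (E.erase x)).powersetCard (m + 1), z ^ (N ∩ S).card := by
              rw [hIE]
          _ = ∑ S ∈ (E.erase x).powersetCard (m + 1), z ^ (N ∩ S).card
              + ∑ S' ∈ (E.erase x).powersetCard m, z ^ (N ∩ S').card := by
              rw [powersetCard_succ_insert hxE', sum_union hdisj, himg]
          _ ≤ ((E.erase x).card.choose (m + 1) : ℝ)
                * (1 - (1 - z) * N.card / (E.erase x).card) ^ (m + 1)
              + ((E.erase x).card.choose m : ℝ)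
                * (1 - (1 - z) * N.card / (E.erase x).card) ^ m := by
              exact add_le_add ih1 ih2
          _ ≤ (((E.erase x).card + 1).choose (m + 1) : ℝ)
                * (1 - (1 - z) * N.card / (((E.erase x).card : ℝ) + 1)) ^ (m + 1) := hstep
          _ = (E.card.choose (m + 1) : ℝ) * (1 - (1 - z) * N.card / E.card) ^ (m + 1) := by
              rw [hcard]
              push_cast
              ring_nf

private lemma per_set {α : Type*} [DecidableEq α] (E N : Finset α) (hNE : N ⊆ E)
    (m n : ℕ) (hn : 0 < n) (δ Q θ : ℝ) (hδ0 : 0 < δ) (hδ1 : δ < 1) (hQpos : 0 < Q)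
    (hθ : 2 * max Q (4 * Real.log ((n : ℝ) / δ)) ≤ θ)
    (hmE : m ≤ E.card)
    (hm : (2 * (E.card : ℝ) / θ) * max Q (4 * Real.log ((n : ℝ) / δ)) ≤ (m : ℝ))
    (htN : θ ≤ (N.card : ℝ)) :
    (((E.powersetCard m).filter (fun S => ((N ∩ S).card : ℝ) < Q)).card : ℝ)
      ≤ δ / n * (E.card.choose m) := by
  classical
  set M := max Q (4 * Real.log ((n : ℝ) / δ)) with hMdef
  have hMQ : Q ≤ M := le_max_left _ _
  have hML : 4 * Real.log ((n : ℝ) / δ) ≤ M := le_max_right _ _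
  have hMpos : 0 < M := lt_of_lt_of_le hQpos hMQ
  have hθpos : 0 < θ := lt_of_lt_of_le (by linarith) hθ
  have htpos : (0 : ℝ) < N.card := lt_of_lt_of_le hθpos htN
  have hte : (N.card : ℝ) ≤ E.card := by exact_mod_cast card_le_card hNE
  have hepos : (0 : ℝ) < E.card := lt_of_lt_of_le htpos hte
  have hmge : 2 * (E.card : ℝ) * M ≤ (N.card : ℝ) * m := by
    have h1 : 2 * (E.card : ℝ) * M ≤ (m : ℝ) * θ := by
      rw [div_mul_eq_mul_div, div_le_iff₀ hθpos] at hm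
      linarith
    have hm0 : (0 : ℝ) ≤ m := Nat.cast_nonneg m
    nlinarith
  set k : ℕ := ⌈Q⌉₊ - 1 with hk
  have hk1 : k + 1 = ⌈Q⌉₊ := Nat.succ_pred_eq_of_pos (Nat.ceil_pos.2 hQpos)
  have hiff : ∀ j : ℕ, ((j : ℝ) < Q) ↔ j ≤ k := by
    intro j
    rw [← Nat.lt_ceil, ← hk1, Nat.lt_succ_iff]
  have hkQ : (k : ℝ) < Q := by
    rw [← Nat.lt_ceil, ← hk1]
    omega
  set B : ℝ := 1 - (1 - 1 / 2) * N.card / E.card with hBdef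
  have hBeq : B = 1 - (N.card : ℝ) / (2 * E.card) := by
    rw [hBdef]; ring
  have hmgf := mgf_bound_s2 (1 / 2 : ℝ) (by norm_num) (by norm_num) E N hNE m
  have htail : (((E.powersetCard m).filter (fun S => ((N ∩ S).card : ℝ) < Q)).card : ℝ)
      * (1 / 2 : ℝ) ^ k ≤ (E.card.choose m : ℝ) * B ^ m := by
    refine le_trans ?_ hmgf
    rw [← nsmul_eq_mul, ← sum_const]
    refine le_trans (sum_le_sum ?_) (sum_le_sum_of_subset_of_nonneg (filter_subset _ _)
      (fun S _ _ => by positivity))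
    intro S hS
    have hjk : (N ∩ S).card ≤ k := (hiff _).1 (mem_filter.1 hS).2
    exact pow_le_pow_of_le_one (by norm_num) (by norm_num) hjk
  have h2k : (0 : ℝ) < (1 / 2 : ℝ) ^ k := by positivity
  have hcount : (((E.powersetCard m).filter (fun S => ((N ∩ S).card : ℝ) < Q)).card : ℝ)
      ≤ (E.card.choose m : ℝ) * B ^ m * 2 ^ k := by
    rw [← le_div_iff₀ h2k] at htail
    calc (((E.powersetCard m).filter (fun S => ((N ∩ S).card : ℝ) < Q)).card : ℝ)
        ≤ (E.card.choose m : ℝ) * B ^ m / (1 / 2 : ℝ) ^ k := htail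
      _ = (E.card.choose m : ℝ) * B ^ m * 2 ^ k := by
          rw [div_eq_mul_inv]
          congr 1
          rw [one_div, inv_pow, inv_inv]
  refine le_trans hcount ?_
  have hB0 : 0 ≤ B := by
    have hle : (N.card : ℝ) / (2 * E.card) ≤ 1 / 2 := by
      rw [div_le_iff₀ (by linarith)]
      linarith
    rw [hBeq]; linarith
  have hBle : B ≤ Real.exp (-((N.card : ℝ) / (2 * E.card))) := by
    have := Real.add_one_le_exp (-((N.card : ℝ) / (2 * E.card)))
    rw [hBeq]; linarith
  have hBm : B ^ m ≤ Real.exp (-((N.card : ℝ) * m / (2 * E.card))) := by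
    calc B ^ m ≤ (Real.exp (-((N.card : ℝ) / (2 * E.card)))) ^ m :=
          pow_le_pow_left₀ hB0 hBle m
      _ = Real.exp ((m : ℝ) * -((N.card : ℝ) / (2 * E.card))) := (Real.exp_nat_mul _ m).symm
      _ = Real.exp (-((N.card : ℝ) * m / (2 * E.card))) := by
          congr 1; ring
  have h2keq : (2 : ℝ) ^ k = Real.exp ((k : ℝ) * Real.log 2) := by
    rw [Real.exp_nat_mul, Real.exp_log two_pos]
  have hδn : δ / (n : ℝ) = Real.exp (Real.log (δ / n)) := by
    rw [Real.exp_log]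
    have : (0 : ℝ) < n := by exact_mod_cast hn
    positivity
  have hlog2 : Real.log 2 ≤ 3 / 4 := by
    linarith [Real.log_two_lt_d9]
  have hlogdn : Real.log (δ / (n : ℝ)) = -Real.log ((n : ℝ) / δ) := by
    rw [← Real.log_inv]
    congr 1
    rw [inv_div]
  have hkM : (k : ℝ) ≤ M := le_trans hkQ.le hMQ
  have hklog : (k : ℝ) * Real.log 2 ≤ M * (3 / 4) :=
    mul_le_mul hkM hlog2 (Real.log_nonneg one_le_two) hMpos.le
  have hMμ : M ≤ (N.card : ℝ) * m / (2 * E.card) := by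
    rw [le_div_iff₀ (by linarith)]
    linarith
  have hlogn : Real.log ((n : ℝ) / δ) ≤ M / 4 := by linarith
  have hexp : B ^ m * 2 ^ k ≤ δ / n := by
    calc B ^ m * 2 ^ k
        ≤ Real.exp (-((N.card : ℝ) * m / (2 * E.card))) * Real.exp ((k : ℝ) * Real.log 2) := by
          rw [h2keq] at *
          exact mul_le_mul hBm le_rfl (by positivity) (Real.exp_nonneg _)
      _ = Real.exp (-((N.card : ℝ) * m / (2 * E.card)) + (k : ℝ) * Real.log 2) :=
          (Real.exp_add _ _).symm
      _ ≤ Real.exp (Real.log (δ / n)) := by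
          apply Real.exp_le_exp.2
          rw [hlogdn]
          linarith
      _ = δ / n := hδn.symm
  calc (E.card.choose m : ℝ) * B ^ m * 2 ^ k
      = (E.card.choose m : ℝ) * (B ^ m * 2 ^ k) := by ring
    _ ≤ (E.card.choose m : ℝ) * (δ / n) :=
        mul_le_mul_of_nonneg_left hexp (Nat.cast_nonneg _)
    _ = δ / n * (E.card.choose m) := by ring

/-- **Lemma 2 of the paper.**
`N₁, …, Nₙ` are subsets of a finite set `E`, and `E₀` is a uniformly random `m`-subset
of `E` (sampling without replacement), modeled as a uniformly random element of
`E.powersetCard m`; the probability of an event is the fraction of `m`-subsets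
realizing it.  For every `δ ∈ (0,1)`, `Q > 0` and `θ ≥ 2·max{Q, 4·ln(n/δ)}`, if
`|E| ≥ m ≥ (2|E|/θ)·max{Q, 4·ln(n/δ)}`, then
`Pr(∃ i, |Nᵢ| ≥ θ ∧ |Nᵢ ∩ E₀| < Q) ≤ δ`. -/
theorem sampling_hits_all_large_sets
    {α : Type*} [Fintype α] [DecidableEq α]
    (E : Finset α) (n : ℕ) (Nsets : Fin n → Finset α) (hsub : ∀ i, Nsets i ⊆ E)
    (m : ℕ) (δ Q θ : ℝ)
    (hδ : δ ∈ Set.Ioo (0 : ℝ) 1) (hQpos : 0 < Q)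
    (hθ : 2 * max Q (4 * Real.log ((n : ℝ) / δ)) ≤ θ)
    (hmE : m ≤ E.card)
    (hm : (2 * (E.card : ℝ) / θ) * max Q (4 * Real.log ((n : ℝ) / δ)) ≤ (m : ℝ)) :
    (Nat.card {S : Finset α // S ∈ E.powersetCard m ∧
        ∃ i, θ ≤ ((Nsets i).card : ℝ) ∧ (((Nsets i) ∩ S).card : ℝ) < Q} : ℝ) /
      (Nat.card {S : Finset α // S ∈ E.powersetCard m} : ℝ)
      ≤ δ := by
  classical
  obtain ⟨hδ0, hδ1⟩ := hδ
  have hDpos : 0 < E.card.choose m := Nat.choose_pos hmE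
  have hDen : (Nat.card {S : Finset α // S ∈ E.powersetCard m}) = E.card.choose m := by
    rw [Nat.card_eq_fintype_card, Fintype.card_coe, card_powersetCard]
  have hNum : Nat.card {S : Finset α // S ∈ E.powersetCard m ∧
        ∃ i, θ ≤ ((Nsets i).card : ℝ) ∧ (((Nsets i) ∩ S).card : ℝ) < Q}
      = ((E.powersetCard m).filter (fun S =>
          ∃ i, θ ≤ ((Nsets i).card : ℝ) ∧ (((Nsets i) ∩ S).card : ℝ) < Q)).card := by
    rw [Nat.card_eq_fintype_card]
    exact Fintype.card_of_subtype _ (fun S => mem_filter)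
  rw [hNum, hDen]
  rw [div_le_iff₀ (by exact_mod_cast hDpos)]
  rcases Nat.eq_zero_or_pos n with hn | hn
  · have hempty : ((E.powersetCard m).filter (fun S =>
        ∃ i, θ ≤ ((Nsets i).card : ℝ) ∧ (((Nsets i) ∩ S).card : ℝ) < Q)) = ∅ := by
      apply filter_false_of_mem
      intro S _
      rintro ⟨i, -⟩
      exact Nat.not_lt_zero i.val (hn ▸ i.isLt)
    rw [hempty]
    simp only [card_empty, Nat.cast_zero]
    positivity
  · have hsubU : ((E.powersetCard m).filter (fun S =>
        ∃ i, θ ≤ ((Nsets i).card : ℝ) ∧ (((Nsets i) ∩ S).card : ℝ) < Q))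
        ⊆ Finset.univ.biUnion (fun i : Fin n => (E.powersetCard m).filter
            (fun S => θ ≤ ((Nsets i).card : ℝ) ∧ (((Nsets i) ∩ S).card : ℝ) < Q)) := by
      intro S hS
      rw [mem_filter] at hS
      obtain ⟨hSP, i, hi⟩ := hS
      exact mem_biUnion.2 ⟨i, mem_univ _, mem_filter.2 ⟨hSP, hi⟩⟩
    have hper : ∀ i : Fin n, (((E.powersetCard m).filter
        (fun S => θ ≤ ((Nsets i).card : ℝ) ∧ (((Nsets i) ∩ S).card : ℝ) < Q)).card : ℝ)
        ≤ δ / n * (E.card.choose m) := by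
      intro i
      by_cases hθi : θ ≤ ((Nsets i).card : ℝ)
      · have hss : (E.powersetCard m).filter
            (fun S => θ ≤ ((Nsets i).card : ℝ) ∧ (((Nsets i) ∩ S).card : ℝ) < Q)
            ⊆ (E.powersetCard m).filter (fun S => (((Nsets i) ∩ S).card : ℝ) < Q) := by
          intro S hS
          rw [mem_filter] at hS ⊢
          exact ⟨hS.1, hS.2.2⟩
        refine le_trans ?_ (per_set E (Nsets i) (hsub i) m n hn δ Q θ hδ0 hδ1 hQpos hθ hmE hm hθi)
        exact_mod_cast card_le_card hss
      · have : (E.powersetCard m).filter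
            (fun S => θ ≤ ((Nsets i).card : ℝ) ∧ (((Nsets i) ∩ S).card : ℝ) < Q) = ∅ := by
          apply filter_false_of_mem
          intro S _ h
          exact hθi h.1
        rw [this]
        simp only [card_empty, Nat.cast_zero]
        have hn' : (0 : ℝ) < n := by exact_mod_cast hn
        positivity
    calc (((E.powersetCard m).filter (fun S =>
          ∃ i, θ ≤ ((Nsets i).card : ℝ) ∧ (((Nsets i) ∩ S).card : ℝ) < Q)).card : ℝ)
        ≤ ((Finset.univ.biUnion (fun i : Fin n => (E.powersetCard m).filter
            (fun S => θ ≤ ((Nsets i).card : ℝ) ∧ (((Nsets i) ∩ S).card : ℝ) < Q))).card : ℝ) := by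
          exact_mod_cast card_le_card hsubU
      _ ≤ ∑ i : Fin n, (((E.powersetCard m).filter
            (fun S => θ ≤ ((Nsets i).card : ℝ) ∧ (((Nsets i) ∩ S).card : ℝ) < Q)).card : ℝ) := by
          push_cast
          exact_mod_cast card_biUnion_le
      _ ≤ ∑ _i : Fin n, δ / n * (E.card.choose m) := sum_le_sum (fun i _ => hper i)
      _ = (n : ℝ) * (δ / n * (E.card.choose m)) := by
          rw [sum_const, card_univ, Fintype.card_fin, nsmul_eq_mul]
      _ = δ * (E.card.choose m) := by
          have hn' : (n : ℝ) ≠ 0 := by positivity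
          field_simp
end

section
/- Let i be a node of a finite directed graph G = (V, E) whose out-neighbors j ∈ N_out(i) carry fixed parameters q_j ∈ [0,1], and let p_i ∈ [0,1]. Suppose a subset of Q edges J_1, ..., J_Q is drawn uniformly at random without replacement from E_out(i), and conditionally on the draw each label y_{i,J_t} ∈ {−1,+1} is independently +1 with probability (p_i + q_{J_t})/2. Let δ̂_out(i) = (1/Q)·Σ_{t=1}^Q 1[y_{i,J_t} = 1] and let μ_p(i) = (p_i + q̄_i)/2 where q̄_i = (1/d_out(i))·Σ_{j ∈ N_out(i)} q_j. If Q = (1/(2ε²))·ln(4|V|/δ) for some ε > 0 and δ ∈ (0,1), then Pr(|δ̂_out(i) − μ_p(i)| > 2ε) ≤ δ/|V|. -/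
open MeasureTheory Finset
open Real
open scoped ENNReal

set_option linter.unusedSectionVars false

section Auxiliary

/-- Key analytic inequality behind Hoeffding's lemma. -/
theorem hoeffding_key {θ : ℝ} (h0 : 0 ≤ θ) (h1 : θ ≤ 1) (u : ℝ) :
    (1 - θ) * exp (-θ * u) + θ * exp ((1 - θ) * u) ≤ exp (u ^ 2 / 8) := by
  have hden : ∀ x : ℝ, 0 < 1 - θ + θ * exp x := by
    intro x
    rcases lt_or_eq_of_le h1 with h | h
    · nlinarith [exp_pos x, (by linarith : 0 < 1 - θ)]
    · nlinarith [exp_pos x]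
  -- φ u = u^2/8 + θ u - log (1 - θ + θ e^u) ≥ 0
  set φ : ℝ → ℝ := fun x => x ^ 2 / 8 + θ * x - log (1 - θ + θ * exp x) with hφdef
  set φ' : ℝ → ℝ := fun x => x / 4 + θ - θ * exp x / (1 - θ + θ * exp x) with hφ'def
  have hd1 : ∀ x, HasDerivAt φ (φ' x) x := by
    intro x
    have h1' : HasDerivAt (fun x : ℝ => 1 - θ + θ * exp x) (θ * exp x) x := by
      simpa using (((Real.hasDerivAt_exp x).const_mul θ).const_add (1 - θ))
    have h2' : HasDerivAt (fun x : ℝ => log (1 - θ + θ * exp x))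
        (θ * exp x / (1 - θ + θ * exp x)) x := h1'.log (hden x).ne'
    have h3' : HasDerivAt (fun x : ℝ => x ^ 2 / 8 + θ * x)
        (x / 4 + θ) x := by
      have := ((hasDerivAt_pow 2 x).div_const 8).add ((hasDerivAt_id x).const_mul θ)
      exact this.congr_deriv (by ring)
    exact h3'.sub h2'
  have hd2 : ∀ x, HasDerivAt φ' (1 / 4 - θ * exp x * (1 - θ) / (1 - θ + θ * exp x) ^ 2) x := by
    intro x
    have hnum : HasDerivAt (fun x : ℝ => θ * exp x) (θ * exp x) x :=
      (Real.hasDerivAt_exp x).const_mul θ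
    have hden' : HasDerivAt (fun x : ℝ => 1 - θ + θ * exp x) (θ * exp x) x := by
      simpa using (((Real.hasDerivAt_exp x).const_mul θ).const_add (1 - θ))
    have hq : HasDerivAt (fun x : ℝ => θ * exp x / (1 - θ + θ * exp x))
        ((θ * exp x * (1 - θ + θ * exp x) - θ * exp x * (θ * exp x)) / (1 - θ + θ * exp x) ^ 2)
        x := hnum.div hden' (hden x).ne'
    have h3' : HasDerivAt (fun x : ℝ => x / 4 + θ) (1 / 4) x := by
      simpa using ((hasDerivAt_id x).div_const 4).add_const θ
    have := h3'.sub hq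
    refine this.congr_deriv ?_
    have hd := (hden x).ne'
    congr 2
    ring
  have hφ'0 : φ' 0 = 0 := by simp [φ']
  have hd2nn : ∀ x, 0 ≤ 1 / 4 - θ * exp x * (1 - θ) / (1 - θ + θ * exp x) ^ 2 := by
    intro x
    rw [sub_nonneg, div_le_iff₀ (pow_pos (hden x) 2)]
    nlinarith [hden x, sq_nonneg (1 - θ - θ * exp x)]
  have hmono : Monotone φ' := by
    apply monotone_of_deriv_nonneg
    · exact fun x => (hd2 x).differentiableAt
    · intro x
      rw [(hd2 x).deriv]
      exact hd2nn x
  have hφ0 : φ 0 = 0 := by simp [φ]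
  have hcont : Continuous φ :=
    continuous_iff_continuousAt.mpr fun x => (hd1 x).differentiableAt.continuousAt
  have hφnn : ∀ x, 0 ≤ φ x := by
    intro x
    rcases le_total 0 x with hx | hx
    · have : MonotoneOn φ (Set.Ici 0) := by
        apply monotoneOn_of_deriv_nonneg (convex_Ici 0)
        · exact hcont.continuousOn
        · intro y _
          exact (hd1 y).differentiableAt.differentiableWithinAt
        · intro y hy
          rw [(hd1 y).deriv]
          rw [← hφ'0]
          exact hmono (le_of_lt (by simpa using hy))
      have h := this Set.self_mem_Ici (Set.mem_Ici.mpr hx) hx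
      rw [hφ0] at h; exact h
    · have : AntitoneOn φ (Set.Iic 0) := by
        apply antitoneOn_of_deriv_nonpos (convex_Iic 0)
        · exact hcont.continuousOn
        · intro y _
          exact (hd1 y).differentiableAt.differentiableWithinAt
        · intro y hy
          rw [(hd1 y).deriv]
          rw [← hφ'0]
          exact hmono (le_of_lt (by simpa using hy))
      have h := this (Set.mem_Iic.mpr hx) Set.self_mem_Iic hx
      rw [hφ0] at h; exact h
  -- conclude
  have key := hφnn u
  have hlog : log (1 - θ + θ * exp u) ≤ θ * u + u ^ 2 / 8 := by
    simp only [φ] at key; linarith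
  have : 1 - θ + θ * exp u ≤ exp (θ * u + u ^ 2 / 8) := by
    calc 1 - θ + θ * exp u = exp (log (1 - θ + θ * exp u)) := (exp_log (hden u)).symm
    _ ≤ exp (θ * u + u ^ 2 / 8) := exp_le_exp.mpr hlog
  have hexpand : (1 - θ) * exp (-θ * u) + θ * exp ((1 - θ) * u)
      = exp (-θ * u) * (1 - θ + θ * exp u) := by
    rw [show (1 - θ) * u = -θ * u + u by ring, exp_add]
    ring
  rw [hexpand]
  calc exp (-θ * u) * (1 - θ + θ * exp u)
      ≤ exp (-θ * u) * exp (θ * u + u ^ 2 / 8) :=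
        mul_le_mul_of_nonneg_left this (exp_pos _).le
    _ = exp (u ^ 2 / 8) := by rw [← exp_add]; ring_nf

/-- Finite weighted Hoeffding mgf bound: mean-zero values in an interval of length `≤ 2`. -/
theorem hoeffding_finset {ι : Type*} (s : Finset ι) (w v : ι → ℝ) (a b l : ℝ)
    (hw : ∀ i ∈ s, 0 ≤ w i) (hws : ∑ i ∈ s, w i = 1)
    (hab : b - a ≤ 2) (hva : ∀ i ∈ s, a ≤ v i) (hvb : ∀ i ∈ s, v i ≤ b)
    (hmean : ∑ i ∈ s, w i * v i = 0) :
    ∑ i ∈ s, w i * exp (l * v i) ≤ exp (l ^ 2 / 2) := by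
  have hs : s.Nonempty := by
    by_contra h
    rw [not_nonempty_iff_eq_empty] at h
    simp [h] at hws
  have ha0 : a ≤ 0 := by
    have h1 : a * 1 ≤ ∑ i ∈ s, w i * v i := by
      rw [← hws, Finset.mul_sum]
      exact Finset.sum_le_sum fun i hi => by
        rw [mul_comm a (w i)]
        exact mul_le_mul_of_nonneg_left (hva i hi) (hw i hi)
    simpa [hmean] using h1
  have hb0 : 0 ≤ b := by
    have h1 : ∑ i ∈ s, w i * v i ≤ b * 1 := by
      rw [← hws, Finset.mul_sum]
      exact Finset.sum_le_sum fun i hi => by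
        rw [mul_comm b (w i)]
        exact mul_le_mul_of_nonneg_left (hvb i hi) (hw i hi)
    simpa [hmean] using h1
  rcases eq_or_lt_of_le (le_trans ha0 hb0 : a ≤ b) with hEq | hlt
  · -- a = b = 0, all v i = 0
    have ha : a = 0 := le_antisymm ha0 (by rw [hEq]; exact hb0)
    have hb : b = 0 := by rw [← hEq, ha]
    have hv0 : ∀ i ∈ s, v i = 0 := fun i hi =>
      le_antisymm (hb ▸ hvb i hi) (ha ▸ hva i hi)
    calc ∑ i ∈ s, w i * exp (l * v i) = ∑ i ∈ s, w i := by
          refine Finset.sum_congr rfl fun i hi => ?_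
          rw [hv0 i hi]; simp
      _ = 1 := hws
      _ ≤ exp (l ^ 2 / 2) := one_le_exp (by positivity)
  · -- main case a < b
    have hba : 0 < b - a := by linarith
    have hpt : ∀ i ∈ s, exp (l * v i)
        ≤ ((b - v i) / (b - a)) * exp (l * a) + ((v i - a) / (b - a)) * exp (l * b) := by
      intro i hi
      have hc1 : 0 ≤ (b - v i) / (b - a) := by
        apply div_nonneg _ hba.le; linarith [hvb i hi]
      have hc2 : 0 ≤ (v i - a) / (b - a) := by
        apply div_nonneg _ hba.le; linarith [hva i hi]
      have hc12 : (b - v i) / (b - a) + (v i - a) / (b - a) = 1 := by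
        field_simp
        ring
      have hcx := convexOn_exp.2 (Set.mem_univ (l * a)) (Set.mem_univ (l * b)) hc1 hc2 hc12
      simp only [smul_eq_mul] at hcx
      have harg : (b - v i) / (b - a) * (l * a) + (v i - a) / (b - a) * (l * b) = l * v i := by
        field_simp
        ring
      rw [harg] at hcx
      exact hcx
    have hstep : ∑ i ∈ s, w i * exp (l * v i)
        ≤ (b / (b - a)) * exp (l * a) + (-a / (b - a)) * exp (l * b) := by
      calc ∑ i ∈ s, w i * exp (l * v i)
          ≤ ∑ i ∈ s, w i * (((b - v i) / (b - a)) * exp (l * a)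
            + ((v i - a) / (b - a)) * exp (l * b)) :=
            Finset.sum_le_sum fun i hi =>
              mul_le_mul_of_nonneg_left (hpt i hi) (hw i hi)
        _ = (b / (b - a)) * exp (l * a) + (-a / (b - a)) * exp (l * b) := by
            have e1 : ∀ i ∈ s, w i * (((b - v i) / (b - a)) * exp (l * a)
                + ((v i - a) / (b - a)) * exp (l * b))
              = (w i * b - w i * v i) * (exp (l * a) / (b - a))
                + (w i * v i - w i * a) * (exp (l * b) / (b - a)) := by
              intro i hi; field_simp
            rw [Finset.sum_congr rfl e1, Finset.sum_add_distrib,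
              ← Finset.sum_mul, ← Finset.sum_mul, Finset.sum_sub_distrib,
              Finset.sum_sub_distrib, ← Finset.sum_mul, ← Finset.sum_mul, hmean, hws]
            field_simp
            ring
    refine hstep.trans ?_
    -- apply key inequality with θ = -a/(b-a), u = l*(b-a)
    set θ : ℝ := -a / (b - a) with hθ
    have hθ0 : 0 ≤ θ := by apply div_nonneg _ hba.le; linarith
    have hθ1 : θ ≤ 1 := by
      rw [hθ, div_le_one hba]; linarith
    have key := hoeffding_key hθ0 hθ1 (l * (b - a))
    have e2 : 1 - θ = b / (b - a) := by
      rw [hθ, eq_div_iff hba.ne']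
      field_simp
      ring
    have e3 : -θ * (l * (b - a)) = l * a := by rw [hθ]; field_simp
    have e4 : (1 - θ) * (l * (b - a)) = l * b := by
      rw [e2]; field_simp
    rw [e3, e4, e2] at key
    refine key.trans (exp_le_exp.mpr ?_)
    have : (l * (b - a)) ^ 2 = l ^ 2 * (b - a) ^ 2 := by ring
    rw [this]
    have h4 : (b - a) ^ 2 ≤ 4 := by nlinarith
    nlinarith [mul_le_mul_of_nonneg_left h4 (sq_nonneg l)]

variable {α : Type*} [Fintype α] [DecidableEq α]

/-- The finset of injective tuples of length `k` with entries in `A`. -/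
def injF (k : ℕ) (A : Finset α) : Finset (Fin k → α) :=
  Finset.univ.filter fun f => Function.Injective f ∧ ∀ t, f t ∈ A

lemma mem_injF {k : ℕ} {A : Finset α} {f : Fin k → α} :
    f ∈ injF k A ↔ Function.Injective f ∧ ∀ t, f t ∈ A := by
  simp [injF]

/-- Decomposition of a sum over injective `(k+1)`-tuples by the first coordinate. -/
lemma sum_injF_succ {M : Type*} [AddCommMonoid M] (k : ℕ) (A : Finset α)
    (φ : (Fin (k + 1) → α) → M) :
    ∑ f ∈ injF (k + 1) A, φ f
      = ∑ j ∈ A, ∑ f ∈ injF k (A.erase j), φ (Fin.cons j f) := by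
  rw [Finset.sum_sigma' A (fun j => injF k (A.erase j)) (fun j f => φ (Fin.cons j f))]
  refine Finset.sum_bij' (fun f _ => (⟨f 0, fun t => f t.succ⟩ : Σ _ : α, (Fin k → α)))
    (fun p _ => Fin.cons p.1 p.2) ?_ ?_ ?_ ?_ ?_
  · intro f hf
    obtain ⟨hinj, hmem⟩ := mem_injF.mp hf
    rw [Finset.mem_sigma]
    refine ⟨hmem 0, mem_injF.mpr ⟨fun t₁ t₂ h => Fin.succ_injective _ (hinj h), fun t => ?_⟩⟩
    rw [Finset.mem_erase]
    exact ⟨fun h => Fin.succ_ne_zero t (hinj h), hmem t.succ⟩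
  · intro p hp
    rw [Finset.mem_sigma] at hp
    obtain ⟨hj, hf⟩ := hp
    obtain ⟨hinj, hmem⟩ := mem_injF.mp hf
    refine mem_injF.mpr ⟨Fin.cons_injective_iff.mpr ⟨?_, hinj⟩, fun t => ?_⟩
    · rintro ⟨t, ht⟩
      exact (Finset.mem_erase.mp (hmem t)).1 ht
    · refine Fin.cases ?_ ?_ t
      · simpa using hj
      · intro t'
        simpa using Finset.mem_of_mem_erase (hmem t')
  · intro f hf
    exact Fin.cons_self_tail f
  · intro p hp
    refine Sigma.ext ?_ ?_
    · simp
    · simp [Fin.cons_succ]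
  · intro f hf
    exact congrArg φ (Fin.cons_self_tail f).symm

lemma card_injF : ∀ (k : ℕ) (A : Finset α), k ≤ A.card →
    (injF k A).card = ∏ i ∈ Finset.range k, (A.card - i) := by
  intro k
  induction k with
  | zero =>
    intro A _
    have h0 : injF 0 A = Finset.univ := Finset.eq_univ_iff_forall.mpr fun f =>
      mem_injF.mpr ⟨Function.injective_of_subsingleton f, fun t => t.elim0⟩
    rw [h0, Finset.range_zero, Finset.prod_empty, Finset.card_univ]
    simp
  | succ k ih =>
    intro A hk
    have hA : ∀ j ∈ A, (injF k (A.erase j)).card = ∏ i ∈ Finset.range k, (A.card - 1 - i) := by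
      intro j hj
      rw [ih (A.erase j) (by rw [Finset.card_erase_of_mem hj]; omega),
        Finset.card_erase_of_mem hj]
    have hdec := sum_injF_succ (M := ℕ) k A (fun _ => 1)
    have hcard : (injF (k + 1) A).card = ∑ j ∈ A, (injF k (A.erase j)).card := by
      rw [Finset.card_eq_sum_ones, hdec]
      exact Finset.sum_congr rfl fun j _ => (Finset.card_eq_sum_ones _).symm
    rw [hcard, Finset.sum_congr rfl hA, Finset.sum_const, smul_eq_mul,
      Finset.prod_range_succ', mul_comm]
    congr 1
    all_goals first
      | exact Finset.prod_congr rfl fun i _ => by omega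
      | omega

/-- Empirical mean of `g` over `A`. -/
noncomputable def emean (g : α → ℝ) (A : Finset α) : ℝ := (∑ j ∈ A, g j) / A.card

/-- One-step mgf bound: the Doob increment distribution on `A × Bool`. -/
theorem step_bound (g : α → ℝ) (l : ℝ) (k : ℕ) (A : Finset α) (hk : k + 1 ≤ A.card)
    (hg : ∀ j ∈ A, g j ∈ Set.Icc (0 : ℝ) 1) :
    ∑ j ∈ A, (g j * exp (l * (1 + (k * emean g (A.erase j) - (k + 1) * emean g A)))
        + (1 - g j) * exp (l * (k * emean g (A.erase j) - (k + 1) * emean g A)))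
      ≤ A.card * exp (l ^ 2 / 2) := by
  have hA0 : 0 < A.card := by omega
  have hAr : (0 : ℝ) < A.card := by exact_mod_cast hA0
  set C : α → ℝ := fun j => k * emean g (A.erase j) - (k + 1) * emean g A with hC
  -- set up the weighted space on A × Bool
  set w : α × Bool → ℝ := fun x => (if x.2 then g x.1 else 1 - g x.1) / A.card with hw
  set v : α × Bool → ℝ := fun x => (if x.2 then 1 else 0) + C x.1 with hv
  have hwnn : ∀ x ∈ A ×ˢ (Finset.univ : Finset Bool), 0 ≤ w x := by
    rintro ⟨j, y⟩ hx
    rw [Finset.mem_product] at hx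
    have := hg j hx.1
    rcases y with _ | _ <;> simp only [w] <;>
      · apply div_nonneg _ hAr.le
        simp only [Bool.false_eq_true, if_false, if_true]
        first
          | linarith [this.2]
          | linarith [this.1]
  have hws : ∑ x ∈ A ×ˢ (Finset.univ : Finset Bool), w x = 1 := by
    rw [Finset.sum_product]
    have : ∀ j ∈ A, ∑ y : Bool, w (j, y) = 1 / A.card := by
      intro j _
      simp only [w, Fintype.sum_bool]
      rw [← add_div]
      norm_num
    rw [Finset.sum_congr rfl this, Finset.sum_const, nsmul_eq_mul]
    field_simp
  -- the quantity as a weighted sum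
  have hrewrite : ∑ j ∈ A, (g j * exp (l * (1 + C j)) + (1 - g j) * exp (l * (C j)))
      = A.card * ∑ x ∈ A ×ˢ (Finset.univ : Finset Bool), w x * exp (l * v x) := by
    rw [Finset.sum_product, Finset.mul_sum]
    refine Finset.sum_congr rfl fun j _ => ?_
    simp only [Fintype.sum_bool, w, v]
    norm_num
    field_simp
    try ring
  rw [hrewrite]
  have hmain : ∑ x ∈ A ×ˢ (Finset.univ : Finset Bool), w x * exp (l * v x) ≤ exp (l ^ 2 / 2) := by
    set S : ℝ := ∑ j ∈ A, g j with hS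
    set c : ℝ := (A.card : ℝ) - 1 with hc
    have hc0 : 0 ≤ c := by
      rw [hc, sub_nonneg]
      exact_mod_cast hA0
    set K : ℝ := k * S / c - (k + 1) * S / A.card with hK
    have hmA : emean g A = S / A.card := rfl
    have hCj : ∀ j ∈ A, C j = K - (k / c) * g j := by
      intro j hj
      rcases Nat.eq_zero_or_pos k with hk0 | hk1
      · subst hk0
        simp [C, K, emean, hmA, hS]
      · have hA2 : 2 ≤ A.card := by omega
        have hcpos : (0 : ℝ) < c := by
          rw [hc, sub_pos]
          exact_mod_cast hA2.trans_lt' one_lt_two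
        have herase : emean g (A.erase j) = (S - g j) / c := by
          rw [emean, Finset.sum_erase_eq_sub hj, Finset.card_erase_of_mem hj, hc]
          congr 1
          rw [Nat.cast_sub (by omega)]
          norm_num
        simp only [hC]
        rw [herase, hmA, hK]
        field_simp
        ring
    have hcoef : (k : ℝ) / c ≤ 1 := by
      rcases Nat.eq_zero_or_pos k with hk0 | hk1
      · subst hk0; simp
      · have hcpos : (0 : ℝ) < c := by
          rw [hc, sub_pos]
          exact_mod_cast (by omega : 1 < A.card)
        rw [div_le_one hcpos, hc]
        have : (k : ℝ) + 1 ≤ A.card := by exact_mod_cast hk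
        linarith
    have hcoefnn : 0 ≤ (k : ℝ) / c := div_nonneg (Nat.cast_nonneg k) hc0
    apply hoeffding_finset (A ×ˢ (Finset.univ : Finset Bool)) w v (K - k / c) (1 + K) l
      hwnn hws (by linarith)
    · rintro ⟨j, y⟩ hx
      rw [Finset.mem_product] at hx
      have hgj := hg j hx.1
      have := hCj j hx.1
      have h2 : (k : ℝ) / c * g j ≤ k / c :=
        (mul_le_of_le_one_right hcoefnn hgj.2)
      rcases y with _ | _ <;> simp only [v, Bool.false_eq_true, if_false, if_true] <;>
        rw [this] <;> linarith
    · rintro ⟨j, y⟩ hx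
      rw [Finset.mem_product] at hx
      have hgj := hg j hx.1
      have := hCj j hx.1
      have h2 : 0 ≤ (k : ℝ) / c * g j := mul_nonneg hcoefnn hgj.1
      rcases y with _ | _ <;> simp only [v, Bool.false_eq_true, if_false, if_true] <;>
        rw [this] <;> linarith
    · -- mean zero
      rw [Finset.sum_product]
      have hper : ∀ j ∈ A, ∑ y : Bool, w (j, y) * v (j, y) = (g j + C j) / A.card := by
        intro j _
        simp only [Fintype.sum_bool, w, v]
        norm_num
        field_simp
        ring
      rw [Finset.sum_congr rfl hper, ← Finset.sum_div]
      have hsum : ∑ j ∈ A, (g j + C j) = 0 := by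
        rw [Finset.sum_add_distrib, Finset.sum_congr rfl hCj, Finset.sum_sub_distrib,
          Finset.sum_const, ← Finset.mul_sum, nsmul_eq_mul]
        rcases Nat.eq_zero_or_pos k with hk0 | hk1
        · subst hk0
          simp only [Nat.cast_zero, zero_div, zero_mul, hK, zero_sub, sub_zero, mul_zero]
          rw [← hS]
          field_simp
          ring
        · have hA2 : 2 ≤ A.card := by omega
          have hcpos : (0 : ℝ) < c := by
            rw [hc, sub_pos]
            exact_mod_cast (by omega : 1 < A.card)
          rw [← hS, hK, hc]
          have hAne : ((A.card : ℝ)) ≠ 0 := hAr.ne'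
          have hcne : ((A.card : ℝ) - 1) ≠ 0 := by rw [← hc]; exact hcpos.ne'
          field_simp
          ring
      rw [hsum, zero_div]
  calc (A.card : ℝ) * ∑ x ∈ A ×ˢ (Finset.univ : Finset Bool), w x * exp (l * v x)
      ≤ A.card * exp (l ^ 2 / 2) := by
        exact mul_le_mul_of_nonneg_left hmain hAr.le

/-- Bernoulli weight of an outcome vector `y` for success probabilities `g ∘ f`. -/
noncomputable def wgt (g : α → ℝ) {k : ℕ} (f : Fin k → α) (y : Fin k → Bool) : ℝ :=
  ∏ t, (if y t then g (f t) else 1 - g (f t))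

/-- Number of successes. -/
def sc {k : ℕ} (y : Fin k → Bool) : ℝ := ∑ t, (if y t then (1 : ℝ) else 0)

lemma wgt_nonneg {g : α → ℝ} {k : ℕ} {f : Fin k → α} (hg : ∀ t, g (f t) ∈ Set.Icc (0:ℝ) 1)
    (y : Fin k → Bool) : 0 ≤ wgt g f y := by
  refine Finset.prod_nonneg fun t _ => ?_
  rcases hy : y t with _ | _ <;> simp only [Bool.false_eq_true, if_false, if_true]
  · linarith [(hg t).2]
  · exact (hg t).1

/-- Main mgf bound for sampling without replacement with Bernoulli labels. -/
theorem mgf_bound_s4 (g : α → ℝ) (l : ℝ) :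
    ∀ (k : ℕ) (A : Finset α), k ≤ A.card → (∀ j ∈ A, g j ∈ Set.Icc (0 : ℝ) 1) →
    ∑ f ∈ injF k A, ∑ y : Fin k → Bool, wgt g f y * exp (l * (sc y - k * emean g A))
      ≤ (injF k A).card * exp (l ^ 2 * k / 2) := by
  intro k
  induction k with
  | zero =>
    intro A _ _
    simp only [CharP.cast_eq_zero, zero_mul, sub_zero]
    have h1 : ∀ f ∈ injF (0:ℕ) A, (∑ y : Fin 0 → Bool, wgt g f y * exp (l * sc y)) = 1 := by
      intro f _
      rw [Fintype.sum_unique]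
      simp [wgt, sc]
    rw [Finset.sum_congr rfl h1, Finset.sum_const, nsmul_eq_mul]
    simp
  | succ k ih =>
    intro A hk hg
    have hA0 : 0 < A.card := by omega
    -- the inner quantity for a fixed first coordinate
    set T : α → ℝ := fun j => ∑ f ∈ injF k (A.erase j), ∑ y : Fin k → Bool,
        wgt g f y * exp (l * (sc y - k * emean g (A.erase j))) with hT
    set B : α → ℝ := fun j =>
        g j * exp (l * (1 + (k * emean g (A.erase j) - (k + 1) * emean g A)))
        + (1 - g j) * exp (l * (k * emean g (A.erase j) - (k + 1) * emean g A)) with hB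
    have hdec : ∑ f ∈ injF (k+1) A, ∑ y : Fin (k+1) → Bool,
        wgt g f y * exp (l * (sc y - (k+1 : ℕ) * emean g A))
        = ∑ j ∈ A, B j * T j := by
      rw [sum_injF_succ k A]
      refine Finset.sum_congr rfl fun j hj => ?_
      rw [hT, hB, Finset.mul_sum]
      refine Finset.sum_congr rfl fun f hf => ?_
      have hysplit : ∑ y : Fin (k+1) → Bool,
          wgt g (Fin.cons j f) y * exp (l * (sc y - (k+1 : ℕ) * emean g A))
          = ∑ p : Bool × (Fin k → Bool),
              wgt g (Fin.cons j f) (Fin.cons p.1 p.2)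
                * exp (l * (sc (Fin.cons p.1 p.2) - (k+1 : ℕ) * emean g A)) :=
        (Fintype.sum_equiv (Fin.consEquiv fun _ => Bool) _ _ fun p => rfl).symm
      rw [hysplit, Fintype.sum_prod_type, Fintype.sum_bool]
      have hw : ∀ (b : Bool) (y' : Fin k → Bool),
          wgt g (Fin.cons j f) (Fin.cons b y')
            = (if b then g j else 1 - g j) * wgt g f y' := by
        intro b y'
        simp only [wgt, Fin.prod_univ_succ, Fin.cons_zero, Fin.cons_succ]
      have hsc : ∀ (b : Bool) (y' : Fin k → Bool),
          sc (Fin.cons b y') = (if b then (1:ℝ) else 0) + sc y' := by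
        intro b y'
        simp only [sc, Fin.sum_univ_succ, Fin.cons_zero, Fin.cons_succ]
      rw [add_mul, Finset.mul_sum, Finset.mul_sum]
      congr 1
      · refine Finset.sum_congr rfl fun y' _ => ?_
        rw [hw, hsc]
        simp only [if_true]
        have harg : l * (1 + sc y' - (k+1 : ℕ) * emean g A)
            = l * (1 + ((k : ℝ) * emean g (A.erase j) - ((k : ℝ) + 1) * emean g A))
              + l * (sc y' - (k : ℝ) * emean g (A.erase j)) := by
          push_cast
          ring
        rw [show (1 : ℝ) + sc y' - (k+1 : ℕ) * emean g A
            = 1 + sc y' - (k+1 : ℕ) * emean g A from rfl]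
        rw [harg, exp_add]
        ring
      · refine Finset.sum_congr rfl fun y' _ => ?_
        rw [hw, hsc]
        simp only [Bool.false_eq_true, if_false]
        have harg : l * (0 + sc y' - (k+1 : ℕ) * emean g A)
            = l * ((k : ℝ) * emean g (A.erase j) - ((k : ℝ) + 1) * emean g A)
              + l * (sc y' - (k : ℝ) * emean g (A.erase j)) := by
          push_cast
          ring
        rw [harg, exp_add]
        ring
    rw [hdec]
    -- bound T j by the inductive hypothesis
    set P : ℕ := ∏ i ∈ Finset.range k, (A.card - 1 - i) with hP
    have hTle : ∀ j ∈ A, T j ≤ (P : ℝ) * exp (l ^ 2 * k / 2) := by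
      intro j hj
      have h1 : k ≤ (A.erase j).card := by
        rw [Finset.card_erase_of_mem hj]; omega
      have h2 := ih (A.erase j) h1 fun i hi => hg i (Finset.mem_of_mem_erase hi)
      rw [card_injF k (A.erase j) h1, Finset.card_erase_of_mem hj] at h2
      have : ∏ i ∈ Finset.range k, (A.card - 1 - i) = P := rfl
      calc T j ≤ ((∏ i ∈ Finset.range k, (A.card - 1 - i) : ℕ) : ℝ) * exp (l ^ 2 * k / 2) := h2
        _ = (P : ℝ) * exp (l ^ 2 * k / 2) := by rw [this]
    have hBnn : ∀ j ∈ A, 0 ≤ B j := by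
      intro j hj
      have h1 := hg j hj
      exact add_nonneg (mul_nonneg h1.1 (exp_pos _).le)
        (mul_nonneg (by linarith [h1.2]) (exp_pos _).le)
    have hstep := step_bound g l k A hk hg
    calc ∑ j ∈ A, B j * T j
        ≤ ∑ j ∈ A, B j * ((P : ℝ) * exp (l ^ 2 * k / 2)) :=
          Finset.sum_le_sum fun j hj =>
            mul_le_mul_of_nonneg_left (hTle j hj) (hBnn j hj)
      _ = (∑ j ∈ A, B j) * ((P : ℝ) * exp (l ^ 2 * k / 2)) := by rw [Finset.sum_mul]
      _ ≤ ((A.card : ℝ) * exp (l ^ 2 / 2)) * ((P : ℝ) * exp (l ^ 2 * k / 2)) := by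
          apply mul_le_mul_of_nonneg_right hstep
          positivity
      _ = ((injF (k+1) A).card : ℝ) * exp (l ^ 2 * (k+1 : ℕ) / 2) := by
          have hcard : (injF (k+1) A).card = A.card * P := by
            have h1 := card_injF (k+1) A hk
            rw [h1, Finset.prod_range_succ', mul_comm, hP]
            congr 1
            exact Finset.prod_congr rfl fun i _ => by omega
          rw [hcard]
          push_cast
          rw [show l ^ 2 * ((k : ℝ) + 1) / 2 = l ^ 2 / 2 + l ^ 2 * (k : ℝ) / 2 by ring,
            exp_add]
          ring

/-- Chernoff bound for the finite sampling-without-replacement + Bernoulli-labels model. -/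
theorem chernoff_finite (g : α → ℝ) (hg : ∀ j, g j ∈ Set.Icc (0:ℝ) 1) (ε : ℝ) (hε : 0 < ε)
    (Q : ℕ) (hQ : 0 < Q) (hQc : Q ≤ Fintype.card α) :
    ∑ f ∈ injF Q (Finset.univ : Finset α),
      ∑ y ∈ Finset.univ.filter (fun y : Fin Q → Bool =>
          2 * ε < |sc y / Q - emean g Finset.univ|), wgt g f y
    ≤ ((injF Q (Finset.univ : Finset α)).card : ℝ) * (2 * exp (-(2 * ε ^ 2 * Q))) := by
  set m : ℝ := emean g (Finset.univ : Finset α) with hm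
  set D : (Fin Q → Bool) → ℝ := fun y => sc y - Q * m with hD
  set E : ℝ := exp (-(4 * ε ^ 2 * Q)) with hE
  have hQr : (0 : ℝ) < Q := by exact_mod_cast hQ
  -- pointwise: on the event, 1 is at most the Chernoff weight
  have hkey : ∀ y : Fin Q → Bool, 2 * ε < |sc y / Q - m| →
      (1 : ℝ) ≤ exp (2 * ε * D y) * E + exp (-(2 * ε) * D y) * E := by
    intro y hy
    have habs : 2 * ε * Q < |D y| := by
      have h2 : D y = (sc y / Q - m) * Q := by
        simp only [hD]
        field_simp
      rw [h2, abs_mul, abs_of_pos hQr]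
      exact mul_lt_mul_of_pos_right hy hQr
    rcases lt_abs.mp habs with h | h
    · have : (1:ℝ) ≤ exp (2 * ε * D y) * E := by
        rw [hE, ← exp_add]
        apply one_le_exp
        nlinarith
      nlinarith [mul_nonneg (exp_pos (-(2 * ε) * D y)).le (exp_pos (-(4 * ε ^ 2 * Q))).le,
        (by rw [hE] : E = exp (-(4 * ε ^ 2 * Q)))]
    · have : (1:ℝ) ≤ exp (-(2 * ε) * D y) * E := by
        rw [hE, ← exp_add]
        apply one_le_exp
        nlinarith
      nlinarith [mul_nonneg (exp_pos (2 * ε * D y)).le (exp_pos (-(4 * ε ^ 2 * Q))).le,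
        (by rw [hE] : E = exp (-(4 * ε ^ 2 * Q)))]
  -- bound the inner sums
  have hinner : ∀ f ∈ injF Q (Finset.univ : Finset α),
      ∑ y ∈ Finset.univ.filter (fun y : Fin Q → Bool => 2 * ε < |sc y / Q - m|), wgt g f y
      ≤ ∑ y : Fin Q → Bool,
          (wgt g f y * exp (2 * ε * D y) * E + wgt g f y * exp (-(2 * ε) * D y) * E) := by
    intro f _
    have hwnn : ∀ y, 0 ≤ wgt g f y := wgt_nonneg fun t => hg (f t)
    calc ∑ y ∈ Finset.univ.filter (fun y : Fin Q → Bool => 2 * ε < |sc y / Q - m|), wgt g f y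
        ≤ ∑ y ∈ Finset.univ.filter (fun y : Fin Q → Bool => 2 * ε < |sc y / Q - m|),
            (wgt g f y * exp (2 * ε * D y) * E + wgt g f y * exp (-(2 * ε) * D y) * E) := by
          refine Finset.sum_le_sum fun y hy => ?_
          rw [Finset.mem_filter] at hy
          have h1 := hkey y hy.2
          calc wgt g f y = wgt g f y * 1 := (mul_one _).symm
            _ ≤ wgt g f y * (exp (2 * ε * D y) * E + exp (-(2 * ε) * D y) * E) :=
                mul_le_mul_of_nonneg_left h1 (hwnn y)
            _ = wgt g f y * exp (2 * ε * D y) * E + wgt g f y * exp (-(2 * ε) * D y) * E := by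
                ring
      _ ≤ ∑ y : Fin Q → Bool,
            (wgt g f y * exp (2 * ε * D y) * E + wgt g f y * exp (-(2 * ε) * D y) * E) := by
          refine Finset.sum_le_sum_of_subset_of_nonneg (Finset.filter_subset _ _) ?_
          intro y _ _
          have := hwnn y
          positivity
  calc ∑ f ∈ injF Q (Finset.univ : Finset α),
      ∑ y ∈ Finset.univ.filter (fun y : Fin Q → Bool => 2 * ε < |sc y / Q - m|), wgt g f y
      ≤ ∑ f ∈ injF Q (Finset.univ : Finset α), ∑ y : Fin Q → Bool,
          (wgt g f y * exp (2 * ε * D y) * E + wgt g f y * exp (-(2 * ε) * D y) * E) :=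
        Finset.sum_le_sum hinner
    _ = (∑ f ∈ injF Q (Finset.univ : Finset α), ∑ y : Fin Q → Bool,
          wgt g f y * exp (2 * ε * D y)) * E
        + (∑ f ∈ injF Q (Finset.univ : Finset α), ∑ y : Fin Q → Bool,
          wgt g f y * exp (-(2 * ε) * D y)) * E := by
        rw [Finset.sum_mul, Finset.sum_mul, ← Finset.sum_add_distrib]
        refine Finset.sum_congr rfl fun f _ => ?_
        rw [Finset.sum_mul, Finset.sum_mul, ← Finset.sum_add_distrib]
    _ ≤ ((injF Q (Finset.univ : Finset α)).card : ℝ) * exp ((2*ε) ^ 2 * Q / 2) * E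
        + ((injF Q (Finset.univ : Finset α)).card : ℝ) * exp ((-(2*ε)) ^ 2 * Q / 2) * E := by
        have h1 := mgf_bound_s4 g (2*ε) Q Finset.univ (by simpa using hQc) (fun j _ => hg j)
        have h2 := mgf_bound_s4 g (-(2*ε)) Q Finset.univ (by simpa using hQc) (fun j _ => hg j)
        have hEpos : 0 < E := exp_pos _
        have hcard : ((Finset.univ : Finset α).card : ℕ) = Fintype.card α := rfl
        gcongr <;> simpa [hD, hm] using h1
    _ = ((injF Q (Finset.univ : Finset α)).card : ℝ) * (2 * exp (-(2 * ε ^ 2 * Q))) := by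
        rw [show ((-(2*ε)) ^ 2 : ℝ) = (2*ε)^2 by ring,
          show ((2*ε)^2 * Q / 2 : ℝ) = 2 * ε^2 * Q by ring, hE,
          mul_assoc, ← exp_add,
          show (2 * ε^2 * (Q:ℝ) + -(4 * ε^2 * Q) : ℝ) = -(2 * ε^2 * Q) by ring]
        ring

end Auxiliary

/-- Measurable-space structure on embedding types (used only to carry the uniform
distribution on a finite type). -/
instance {α β : Type*} : MeasurableSpace (α ↪ β) := ⊤

instance {α β : Type*} : MeasurableSingletonClass (α ↪ β) :=
  ⟨fun _ => MeasurableSpace.measurableSet_top⟩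

/-- **Concentration of `δ̂_out(i)`.**  Node `i` of a graph with vertex set `V` has
out-neighborhood `Nout` (of size `d_out(i) = Nout.card`), whose members `j` carry fixed
parameters `q j ∈ [0,1]`; `p ∈ [0,1]` is the parameter of `i`.  A sample `J₁, …, J_Q`
of `Q` out-neighbors drawn uniformly at random without replacement is modeled as a
uniformly random embedding `σ : Fin Q ↪ ↥Nout`; conditionally on the draw, each label
`y_{i,J_t}` is independently `+1` with probability `(p + q (σ t))/2`, modeled by
independent uniform `[0,1]` thresholds `u t` via `y_{i,J_t} = +1 ↔ u t < (p + q (σ t))/2`.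
Let `δ̂_out(i) = (1/Q)·∑_t 1[y_{i,J_t} = 1]` and
`μ_p(i) = (p + q̄)/2` with `q̄ = (∑_{j ∈ Nout} q j)/d_out(i)`.
If `Q = (1/(2ε²))·ln(4|V|/δ)`, then `Pr(|δ̂_out(i) − μ_p(i)| > 2ε) ≤ δ/|V|`. -/
theorem delta_out_concentration
    {V : Type*} [Fintype V] [DecidableEq V]
    (Nout : Finset V) (Q : ℕ) (hQpos : 0 < Q) (hQd : Q ≤ Nout.card)
    (p : ℝ) (hp : p ∈ Set.Icc (0 : ℝ) 1)
    (q : V → ℝ) (hq : ∀ j ∈ Nout, q j ∈ Set.Icc (0 : ℝ) 1)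
    (ε δ : ℝ) (hε : 0 < ε) (hδ : δ ∈ Set.Ioo (0 : ℝ) 1)
    (hQdef : (Q : ℝ) = 1 / (2 * ε ^ 2) * Real.log (4 * (Fintype.card V : ℝ) / δ)) :
    ((@PMF.uniformOfFintype (Fin Q ↪ {j // j ∈ Nout}) _
          (Function.Embedding.nonempty_of_card_le (by simpa using hQd))).toMeasure.prod
        (Measure.pi fun _ : Fin Q => volume.restrict (Set.Icc (0 : ℝ) 1)))
      {ω : (Fin Q ↪ {j // j ∈ Nout}) × (Fin Q → ℝ) |
        2 * ε < |(∑ t : Fin Q,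
              if ω.2 t < (p + q (ω.1 t : V)) / 2 then (1 : ℝ) else 0) / (Q : ℝ)
            - (p + (∑ j ∈ Nout, q j) / (Nout.card : ℝ)) / 2|}
      ≤ ENNReal.ofReal (δ / (Fintype.card V : ℝ)) := by
  classical
  set S := {j // j ∈ Nout}
  set g : S → ℝ := fun j => (p + q (j : V)) / 2 with hgdef
  have hgIcc : ∀ j : S, g j ∈ Set.Icc (0:ℝ) 1 := by
    intro j
    have h1 := hq (j : V) j.2
    constructor
    · simp only [hgdef]; linarith [hp.1, h1.1]
    · simp only [hgdef]; linarith [hp.2, h1.2]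
  have hNpos : 0 < Nout.card := lt_of_lt_of_le hQpos hQd
  have hcardS : Fintype.card S = Nout.card := Fintype.card_coe Nout
  have hQS : Q ≤ Fintype.card S := by rw [hcardS]; exact hQd
  -- the mean matches
  have hmean : (p + (∑ j ∈ Nout, q j) / (Nout.card : ℝ)) / 2 = emean g Finset.univ := by
    rw [emean]
    have h1 : ∑ j : S, g j = (Nout.card * p + ∑ j ∈ Nout, q j) / 2 := by
      simp only [hgdef]
      rw [Finset.univ_eq_attach, Finset.sum_attach Nout (fun j => (p + q j) / 2),
        ← Finset.sum_div, Finset.sum_add_distrib, Finset.sum_const, nsmul_eq_mul]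
    rw [h1, Finset.card_univ, hcardS]
    have hd : ((Nout.card : ℝ)) ≠ 0 := by exact_mod_cast hNpos.ne'
    field_simp
  -- main body
  have hne : Nonempty (Fin Q ↪ S) := Function.Embedding.nonempty_of_card_le (by simpa using hQS)
  set Ys : Finset (Fin Q → Bool) :=
    Finset.univ.filter (fun y => 2 * ε < |sc y / Q - emean g Finset.univ|) with hYs
  set box : (Fin Q ↪ S) → (Fin Q → Bool) → Set (Fin Q → ℝ) := fun σ y =>
    Set.univ.pi (fun t => if y t then Set.Iio (g (σ t)) else Set.Ici (g (σ t))) with hbox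
  have hQr : (0 : ℝ) < Q := by exact_mod_cast hQpos
  have hwnn : ∀ (σ : Fin Q ↪ S) (y : Fin Q → Bool), 0 ≤ wgt g (⇑σ) y :=
    fun σ y => wgt_nonneg (fun t => hgIcc (σ t)) y
  -- the event is covered by the boxes
  have hsub : {ω : (Fin Q ↪ S) × (Fin Q → ℝ) |
        2 * ε < |(∑ t : Fin Q,
              if ω.2 t < (p + q (ω.1 t : V)) / 2 then (1 : ℝ) else 0) / (Q : ℝ)
            - (p + (∑ j ∈ Nout, q j) / (Nout.card : ℝ)) / 2|}
      ⊆ ⋃ σ ∈ (Finset.univ : Finset (Fin Q ↪ S)), ⋃ y ∈ Ys,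
          (({σ} : Set (Fin Q ↪ S)) ×ˢ box σ y) := by
    rintro ⟨σ, u⟩ hω
    simp only [Set.mem_setOf_eq] at hω
    set y : Fin Q → Bool := fun t => decide (u t < g (σ t)) with hy
    have hsum : (∑ t : Fin Q, if u t < (p + q ((σ t : S) : V)) / 2 then (1:ℝ) else 0)
        = sc y := by
      simp only [sc, hy, decide_eq_true_eq, hgdef]
    rw [hsum, hmean] at hω
    refine Set.mem_iUnion₂.mpr ⟨σ, Finset.mem_univ σ, Set.mem_iUnion₂.mpr ⟨y, ?_, ?_⟩⟩
    · rw [hYs, Finset.mem_filter]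
      exact ⟨Finset.mem_univ _, hω⟩
    · refine Set.mem_prod.mpr ⟨rfl, ?_⟩
      simp only [hbox]
      refine Set.mem_univ_pi.mpr fun t => ?_
      by_cases h : u t < g (σ t)
      · simp [hy, h]
      · simp [hy, h, Set.mem_Ici, le_of_not_gt h]
  -- per-box measure computations
  have hμ1 : ∀ (hne' : Nonempty (Fin Q ↪ S)) (σ : Fin Q ↪ S),
      (@PMF.uniformOfFintype (Fin Q ↪ S) _ hne').toMeasure {σ}
        = (Fintype.card (Fin Q ↪ S) : ℝ≥0∞)⁻¹ := by
    intro hne' σ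
    rw [PMF.toMeasure_apply_singleton _ _ MeasurableSpace.measurableSet_top,
      PMF.uniformOfFintype_apply]
  have hμ2 : ∀ (σ : Fin Q ↪ S) (y : Fin Q → Bool),
      (Measure.pi fun _ : Fin Q => volume.restrict (Set.Icc (0 : ℝ) 1)) (box σ y)
        = ENNReal.ofReal (wgt g (⇑σ) y) := by
    intro σ y
    simp only [hbox]
    rw [Measure.pi_pi, wgt,
      ENNReal.ofReal_prod_of_nonneg (fun t _ => by
        rcases h : y t with _|_ <;> simp only [Bool.false_eq_true, if_false, if_true]
        · linarith [(hgIcc (σ t)).2]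
        · exact (hgIcc (σ t)).1)]
    refine Finset.prod_congr rfl fun t _ => ?_
    rcases h : y t with _|_ <;> simp only [Bool.false_eq_true, if_false, if_true]
    · rw [Measure.restrict_apply measurableSet_Ici]
      have he : Set.Ici (g (σ t)) ∩ Set.Icc 0 1 = Set.Icc (g (σ t)) 1 := by
        ext x
        simp only [Set.mem_inter_iff, Set.mem_Ici, Set.mem_Icc]
        constructor
        · rintro ⟨h1, _, h3⟩; exact ⟨h1, h3⟩
        · rintro ⟨h1, h2⟩; exact ⟨h1, (hgIcc (σ t)).1.trans h1, h2⟩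
      rw [he, Real.volume_Icc]
    · rw [Measure.restrict_apply measurableSet_Iio]
      have he : Set.Iio (g (σ t)) ∩ Set.Icc 0 1 = Set.Ico 0 (g (σ t)) := by
        ext x
        simp only [Set.mem_inter_iff, Set.mem_Iio, Set.mem_Icc, Set.mem_Ico]
        constructor
        · rintro ⟨h1, h2, _⟩; exact ⟨h2, h1⟩
        · rintro ⟨h1, h2⟩; exact ⟨h2, h1, h2.le.trans (hgIcc (σ t)).2⟩
      rw [he, Real.volume_Ico, sub_zero]
  -- identification of the embedding sum with the injective-tuple sum
  have hT : ∑ σ ∈ (Finset.univ : Finset (Fin Q ↪ S)), ∑ y ∈ Ys, wgt g (⇑σ) y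
      = ∑ f ∈ injF Q (Finset.univ : Finset S), ∑ y ∈ Ys, wgt g f y := by
    refine Finset.sum_bij' (fun σ _ => (⇑σ : Fin Q → S))
      (fun f hf => ⟨f, (mem_injF.mp hf).1⟩) ?_ ?_ ?_ ?_ ?_
    · intro σ _
      exact mem_injF.mpr ⟨σ.injective, fun t => Finset.mem_univ _⟩
    · intro f _
      exact Finset.mem_univ _
    · intro σ _
      rfl
    · intro f _
      rfl
    · intro σ _
      rfl
  have hN : Fintype.card (Fin Q ↪ S) = (injF Q (Finset.univ : Finset S)).card := by
    rw [← Finset.card_univ]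
    refine Finset.card_bij' (fun σ _ => (⇑σ : Fin Q → S))
      (fun f hf => ⟨f, (mem_injF.mp hf).1⟩) ?_ ?_ ?_ ?_
    · intro σ _
      exact mem_injF.mpr ⟨σ.injective, fun t => Finset.mem_univ _⟩
    · intro f _
      exact Finset.mem_univ _
    · intro σ _
      rfl
    · intro f _
      rfl
  -- numeric bound
  have hn : (0:ℝ) < (Fintype.card V : ℝ) := by
    have h1 : 0 < Fintype.card V :=
      lt_of_lt_of_le hNpos (le_trans (Finset.card_le_univ Nout) (le_of_eq (Finset.card_univ)))
    exact_mod_cast h1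
  have hδ0 := hδ.1
  have hX : 2 * exp (-(2 * ε ^ 2 * Q)) ≤ δ / (Fintype.card V : ℝ) := by
    have hεne : (ε : ℝ) ≠ 0 := hε.ne'
    have hL : -(2 * ε ^ 2 * (Q:ℝ)) = -Real.log (4 * (Fintype.card V : ℝ) / δ) := by
      rw [hQdef]
      field_simp
    rw [hL, Real.exp_neg, Real.exp_log (by positivity), inv_div]
    have h2 : 2 * (δ / (4 * (Fintype.card V : ℝ))) = δ / (2 * (Fintype.card V : ℝ)) := by
      field_simp
      ring
    rw [h2, div_le_div_iff₀ (by positivity) hn]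
    nlinarith
  -- main measure estimate
  refine le_trans (measure_mono hsub) ?_
  refine le_trans (measure_biUnion_finset_le _ _) ?_
  refine le_trans (Finset.sum_le_sum fun σ _ => measure_biUnion_finset_le Ys _) ?_
  calc ∑ σ ∈ (Finset.univ : Finset (Fin Q ↪ S)), ∑ y ∈ Ys,
        ((@PMF.uniformOfFintype (Fin Q ↪ S) _
            (Function.Embedding.nonempty_of_card_le (by simpa using hQS))).toMeasure.prod
          (Measure.pi fun _ : Fin Q => volume.restrict (Set.Icc (0 : ℝ) 1)))
          (({σ} : Set (Fin Q ↪ S)) ×ˢ box σ y)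
      = ∑ σ ∈ (Finset.univ : Finset (Fin Q ↪ S)), ∑ y ∈ Ys,
          (Fintype.card (Fin Q ↪ S) : ℝ≥0∞)⁻¹ * ENNReal.ofReal (wgt g (⇑σ) y) := by
        refine Finset.sum_congr rfl fun σ _ => Finset.sum_congr rfl fun y _ => ?_
        rw [Measure.prod_prod, hμ1, hμ2]
    _ = (Fintype.card (Fin Q ↪ S) : ℝ≥0∞)⁻¹
        * ENNReal.ofReal (∑ σ ∈ (Finset.univ : Finset (Fin Q ↪ S)), ∑ y ∈ Ys, wgt g (⇑σ) y) := by
        have h1 : ∀ σ : Fin Q ↪ S, ∑ y ∈ Ys,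
            (Fintype.card (Fin Q ↪ S) : ℝ≥0∞)⁻¹ * ENNReal.ofReal (wgt g (⇑σ) y)
            = (Fintype.card (Fin Q ↪ S) : ℝ≥0∞)⁻¹ * ENNReal.ofReal (∑ y ∈ Ys, wgt g (⇑σ) y) := by
          intro σ
          rw [← Finset.mul_sum, ENNReal.ofReal_sum_of_nonneg (fun y _ => hwnn σ y)]
        rw [Finset.sum_congr rfl fun σ _ => h1 σ, ← Finset.mul_sum,
          ENNReal.ofReal_sum_of_nonneg (fun σ _ => Finset.sum_nonneg fun y _ => hwnn σ y)]
    _ ≤ (Fintype.card (Fin Q ↪ S) : ℝ≥0∞)⁻¹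
        * ENNReal.ofReal (((injF Q (Finset.univ : Finset S)).card : ℝ)
            * (2 * exp (-(2 * ε ^ 2 * Q)))) := by
        refine mul_le_mul_right (ENNReal.ofReal_le_ofReal ?_) _
        rw [hT]
        have hch := chernoff_finite g hgIcc ε hε Q hQpos hQS
        rw [← hYs] at hch
        exact hch
    _ = ENNReal.ofReal (2 * exp (-(2 * ε ^ 2 * Q))) := by
        rw [ENNReal.ofReal_mul (Nat.cast_nonneg _), ENNReal.ofReal_natCast, ← hN,
          ← mul_assoc, ENNReal.inv_mul_cancel, one_mul]
        · exact_mod_cast (Fintype.card_pos (α := Fin Q ↪ S)).ne'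
        · exact ENNReal.natCast_ne_top _
    _ ≤ ENNReal.ofReal (δ / (Fintype.card V : ℝ)) := ENNReal.ofReal_le_ofReal hX
end

section
/- Let E_L' be a set of Q directed edges in which every vertex occurs at most once as an edge origin and at most once as an edge destination. Suppose the parameters p_i of all origin vertices are i.i.d. [0,1]-valued random variables with mean μ_p, the parameters q_j of all destination vertices are i.i.d. [0,1]-valued random variables with mean μ_q (independent of the p's), and conditionally on all parameters each edge label y_{i,j} ∈ {−1,+1} is independently +1 with probability (p_i + q_j)/2. Let τ̂ = (1/Q)·Σ_{(i,j) ∈ E_L'} 1[y_{i,j} = 1]. If Q ≥ (1/(2ε²))·ln(2/δ) for some ε > 0 and δ ∈ (0,1), then Pr(|τ̂ − (μ_p + μ_q)/2| > 3ε) ≤ 3δ. -/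
open MeasureTheory Finset Real ProbabilityTheory

lemma iIndep_eval {Q : ℕ} {E : Type*} [MeasurableSpace E] (θ : Measure E)
    [IsProbabilityMeasure θ] :
    iIndepFun
      (fun t (ω : Fin Q → E) => ω t) (Measure.pi fun _ => θ) := by
  classical
  rw [iIndepFun_iff_measure_inter_preimage_eq_mul]
  intro S sets hsets
  have h1 : (⋂ i ∈ S, (fun ω : Fin Q → E => ω i) ⁻¹' sets i)
      = Set.pi Set.univ (fun i => if i ∈ S then sets i else Set.univ) := by
    ext ω; simp only [Set.mem_iInter, Set.mem_preimage, Set.mem_pi, Set.mem_univ, true_imp_iff]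
    constructor
    · intro h i; split_ifs with hi
      · exact h i hi
      · trivial
    · intro h i hi; have := h i; rwa [if_pos hi] at this
  rw [h1, Measure.pi_pi]
  have h2 : ∀ i : Fin Q, (Measure.pi fun _ : Fin Q => θ) ((fun ω : Fin Q → E => ω i) ⁻¹' sets i)
      = θ (sets i) := by
    intro i
    have : (fun ω : Fin Q → E => ω i) ⁻¹' sets i
        = Set.pi Set.univ (Function.update (fun _ : Fin Q => (Set.univ : Set E)) i (sets i)) := by
      rw [Set.eval_preimage]
    rw [this, Measure.pi_pi]
    rw [Finset.prod_eq_single i]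
    · simp
    · intro j _ hj; simp [Function.update_of_ne hj]
    · simp
  calc (∏ i : Fin Q, θ (if i ∈ S then sets i else Set.univ))
      = ∏ i ∈ S, θ (sets i) := by
        have : ∀ i : Fin Q, θ (if i ∈ S then sets i else Set.univ)
            = if i ∈ S then θ (sets i) else 1 := by
          intro i; split_ifs <;> simp
        simp_rw [this]
        rw [Finset.prod_ite_mem, Finset.univ_inter]
    _ = ∏ i ∈ S, (Measure.pi fun _ : Fin Q => θ) ((fun ω : Fin Q → E => ω i) ⁻¹' sets i) := by
        exact Finset.prod_congr rfl fun i _ => (h2 i).symm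

lemma pi_map_eval {Q : ℕ} {E : Type*} [MeasurableSpace E] (θ : Measure E)
    [IsProbabilityMeasure θ] (t : Fin Q) :
    (Measure.pi fun _ : Fin Q => θ).map (fun ω => ω t) = θ := by
  classical
  ext s hs
  rw [Measure.map_apply (measurable_pi_apply t) hs]
  rw [show (fun ω : Fin Q → E => ω t) ⁻¹' s
      = Set.pi Set.univ (Function.update (fun _ : Fin Q => (Set.univ : Set E)) t s) from
    Set.eval_preimage]
  rw [Measure.pi_pi]
  rw [Finset.prod_eq_single t]
  · simp
  · intro j _ hj; simp [Function.update_of_ne hj]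
  · simp

lemma exp_quad_bound {x : ℝ} (h : |x| ≤ 1) : Real.exp x ≤ 1 + x + (3/4) * x^2 := by
  have h2 := Real.exp_bound h (n := 2) (by norm_num)
  simp [Finset.sum_range_succ] at h2
  have h3 : |Real.exp x - (1 + x)| ≤ (3/4) * x^2 := by
    calc |Real.exp x - (1+x)| ≤ |x|^2 * ((2+1)/((2:ℕ).factorial * 2)) := by
          convert h2 using 2 <;> norm_num
      _ = (3/4) * x^2 := by rw [sq_abs]; simp [Nat.factorial]; ring
  have := abs_le.mp h3
  linarith [this.1, this.2]

lemma bernoulli_mgf_bound {c τ : ℝ} (hc : |c| ≤ 1) (hτ0 : 0 ≤ τ) (hτ1 : τ ≤ 1) :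
    1 + (Real.exp c - 1) * τ ≤ Real.exp (c * τ + (3/4) * c^2) := by
  calc 1 + (Real.exp c - 1) * τ ≤ Real.exp ((Real.exp c - 1) * τ) := by
        linarith [Real.add_one_le_exp ((Real.exp c - 1) * τ)]
    _ ≤ Real.exp (c * τ + (3/4) * c^2) := by
        apply Real.exp_le_exp.mpr
        have h1 : Real.exp c - 1 ≤ c + (3/4) * c^2 := by
          have := exp_quad_bound hc; linarith
        have h2 : (Real.exp c - 1) * τ ≤ (c + (3/4) * c^2) * τ :=
          mul_le_mul_of_nonneg_right h1 hτ0
        have h3 : (3/4) * c^2 * τ ≤ (3/4) * c^2 := by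
          have : (0:ℝ) ≤ (3/4) * c^2 := by positivity
          nlinarith
        nlinarith

lemma int_id_of_Icc (ν : Measure ℝ) [IsProbabilityMeasure ν] (hν : ν (Set.Icc (0:ℝ) 1) = 1) :
    Integrable (fun x : ℝ => x) ν := by
  have hae : ∀ᵐ x ∂ν, x ∈ Set.Icc (0:ℝ) 1 := by
    rw [ae_iff]
    have : {x : ℝ | ¬ x ∈ Set.Icc (0:ℝ) 1} = (Set.Icc (0:ℝ) 1)ᶜ := rfl
    rw [this, measure_compl measurableSet_Icc (by simp), hν]
    simp
  refine Integrable.mono' (integrable_const 1) measurable_id.aestronglyMeasurable ?_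
  filter_upwards [hae] with x hx
  rw [Real.norm_eq_abs, abs_le]
  constructor <;> [linarith [hx.1]; exact hx.2]

lemma mean_mem_Icc (ν : Measure ℝ) [IsProbabilityMeasure ν] (hν : ν (Set.Icc (0:ℝ) 1) = 1) :
    (∫ x, x ∂ν) ∈ Set.Icc (0:ℝ) 1 := by
  have hae : ∀ᵐ x ∂ν, x ∈ Set.Icc (0:ℝ) 1 := by
    rw [ae_iff]
    have : {x : ℝ | ¬ x ∈ Set.Icc (0:ℝ) 1} = (Set.Icc (0:ℝ) 1)ᶜ := rfl
    rw [this, measure_compl measurableSet_Icc (by simp), hν]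
    simp
  constructor
  · exact integral_nonneg_of_ae (by filter_upwards [hae] with x hx using hx.1)
  · have h1 : ∫ x, x ∂ν ≤ ∫ _, (1:ℝ) ∂ν := by
      refine integral_mono_ae (int_id_of_Icc ν hν) (integrable_const 1) ?_
      filter_upwards [hae] with x hx using hx.2
    simpa using h1

lemma theta_set (νp νq : Measure ℝ) [IsProbabilityMeasure νp] [IsProbabilityMeasure νq] (hνp : νp (Set.Icc (0 : ℝ) 1) = 1) (hνq : νq (Set.Icc (0 : ℝ) 1) = 1) :
    (νp.prod (νq.prod (volume.restrict (Set.Icc (0:ℝ) 1))))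
      {e : ℝ × ℝ × ℝ | e.2.2 < (e.1 + e.2.1) / 2}
    = ENNReal.ofReal (((∫ x, x ∂νp) + ∫ x, x ∂νq) / 2) := by
  set u := volume.restrict (Set.Icc (0:ℝ) 1) with hu
  have hpu : IsProbabilityMeasure u := ⟨by simp [hu, Real.volume_Icc]⟩
  have mS : MeasurableSet {e : ℝ × ℝ × ℝ | e.2.2 < (e.1 + e.2.1) / 2} :=
    measurableSet_lt (measurable_snd.snd) ((measurable_fst.add measurable_snd.fst).div_const 2)
  have haep : ∀ᵐ p ∂νp, p ∈ Set.Icc (0:ℝ) 1 := by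
    rw [ae_iff]
    have : {x : ℝ | ¬ x ∈ Set.Icc (0:ℝ) 1} = (Set.Icc (0:ℝ) 1)ᶜ := rfl
    rw [this, measure_compl measurableSet_Icc (by simp), hνp]; simp
  have haeq : ∀ᵐ q ∂νq, q ∈ Set.Icc (0:ℝ) 1 := by
    rw [ae_iff]
    have : {x : ℝ | ¬ x ∈ Set.Icc (0:ℝ) 1} = (Set.Icc (0:ℝ) 1)ᶜ := rfl
    rw [this, measure_compl measurableSet_Icc (by simp), hνq]; simp
  have hiq := int_id_of_Icc νq hνq
  have hip := int_id_of_Icc νp hνp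
  -- inner-inner: uniform measure of {v | v < c}
  have hunif : ∀ c : ℝ, c ∈ Set.Icc (0:ℝ) 1 → u {v : ℝ | v < c} = ENNReal.ofReal c := by
    intro c hc
    have : {v : ℝ | v < c} = Set.Iio c := rfl
    rw [this, hu, Measure.restrict_apply measurableSet_Iio]
    have : Set.Iio c ∩ Set.Icc (0:ℝ) 1 = Set.Ico 0 c := by
      ext v
      simp only [Set.mem_inter_iff, Set.mem_Iio, Set.mem_Icc, Set.mem_Ico]
      constructor
      · rintro ⟨h1, h2, h3⟩; exact ⟨h2, h1⟩
      · rintro ⟨h1, h2⟩; exact ⟨h2, h1, by linarith [hc.2]⟩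
    rw [this, Real.volume_Ico, sub_zero]
  rw [Measure.prod_apply mS]
  have hinner : ∀ᵐ p ∂νp,
      (νq.prod u) (Prod.mk p ⁻¹' {e : ℝ × ℝ × ℝ | e.2.2 < (e.1 + e.2.1) / 2})
        = ENNReal.ofReal ((p + ∫ x, x ∂νq) / 2) := by
    filter_upwards [haep] with p hp
    have mS2 : MeasurableSet {x : ℝ × ℝ | x.2 < (p + x.1) / 2} :=
      measurableSet_lt measurable_snd ((measurable_const.add measurable_fst).div_const 2)
    have : Prod.mk p ⁻¹' {e : ℝ × ℝ × ℝ | e.2.2 < (e.1 + e.2.1) / 2}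
        = {x : ℝ × ℝ | x.2 < (p + x.1) / 2} := rfl
    rw [this, Measure.prod_apply mS2]
    have h1 : ∀ᵐ q ∂νq, u (Prod.mk q ⁻¹' {x : ℝ × ℝ | x.2 < (p + x.1) / 2})
        = ENNReal.ofReal ((p + q) / 2) := by
      filter_upwards [haeq] with q hq
      have : Prod.mk q ⁻¹' {x : ℝ × ℝ | x.2 < (p + x.1) / 2} = {v : ℝ | v < (p + q)/2} := rfl
      rw [this, hunif]
      constructor
      · linarith [hp.1, hq.1]
      · linarith [hp.2, hq.2]
    rw [lintegral_congr_ae h1]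
    have hint2 : Integrable (fun q : ℝ => (p + q) / 2) νq :=
      ((integrable_const p).add hiq).div_const 2
    rw [← ofReal_integral_eq_lintegral_ofReal hint2
        (by filter_upwards [haeq] with q hq
            exact div_nonneg (by linarith [hp.1, hq.1]) (by norm_num))]
    congr 1
    rw [integral_div, integral_add (integrable_const p) hiq, integral_const]
    simp
  rw [lintegral_congr_ae hinner]
  have hint3 : Integrable (fun p : ℝ => (p + ∫ x, x ∂νq) / 2) νp :=
    (hip.add (integrable_const _)).div_const 2
  rw [← ofReal_integral_eq_lintegral_ofReal hint3
      (by
        filter_upwards [haep] with p hp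
        have hm := (mean_mem_Icc νq hνq).1
        exact div_nonneg (by linarith [hp.1]) (by norm_num))]
  congr 1
  rw [integral_div, integral_add hip (integrable_const _), integral_const]
  simp

lemma pi_bernoulli_concentration {E : Type*} [MeasurableSpace E] (θ : Measure E)
    [IsProbabilityMeasure θ] (g : E → ℝ) (hgm : Measurable g)
    (hg01 : ∀ e, g e = 0 ∨ g e = 1)
    (Q : ℕ) (hQ : 1 ≤ Q) (τ ε δ : ℝ)
    (hτ : ∫ e, g e ∂θ = τ) (hτ0 : 0 ≤ τ) (hτ1 : τ ≤ 1)
    (hε : 0 < ε) (hδ : δ ∈ Set.Ioo (0:ℝ) 1)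
    (hQbound : (1 / (2 * ε ^ 2)) * Real.log (2 / δ) ≤ (Q : ℝ)) :
    (Measure.pi fun _ : Fin Q => θ)
      {ω : Fin Q → E | 3 * ε < |(∑ t : Fin Q, g (ω t)) / (Q:ℝ) - τ|}
      ≤ ENNReal.ofReal (3 * δ) := by
  classical
  set P := (Measure.pi fun _ : Fin Q => θ) with hP
  haveI hPP : IsProbabilityMeasure P := by
    constructor; rw [hP, Measure.pi_univ]; simp
  set X : Fin Q → (Fin Q → E) → ℝ := fun t => g ∘ (fun ω => ω t) with hX
  have hXm : ∀ t, Measurable (X t) := fun t => hgm.comp (measurable_pi_apply t)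
  have hX01 : ∀ t ω, X t ω = 0 ∨ X t ω = 1 := fun t ω => hg01 _
  have hX0 : ∀ t ω, 0 ≤ X t ω := by
    intro t ω; rcases hX01 t ω with h | h <;> rw [h] <;> norm_num
  have hX1 : ∀ t ω, X t ω ≤ 1 := by
    intro t ω; rcases hX01 t ω with h | h <;> rw [h] <;> norm_num
  have hXint : ∀ t, Integrable (X t) P := by
    intro t
    refine Integrable.mono' (integrable_const 1) (hXm t).aestronglyMeasurable ?_
    exact Filter.Eventually.of_forall fun ω => by
      rw [Real.norm_eq_abs, abs_le]; exact ⟨by linarith [hX0 t ω], hX1 t ω⟩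
  have hXmean : ∀ t, ∫ ω, X t ω ∂P = τ := by
    intro t
    have h1 : ∫ ω, X t ω ∂P = ∫ y, g y ∂(P.map (fun ω => ω t)) := by
      rw [integral_map (measurable_pi_apply t).aemeasurable hgm.aestronglyMeasurable]
      rfl
    rw [h1, hP, pi_map_eval θ t, hτ]
  have hmgf : ∀ t (c : ℝ), mgf (X t) P c = 1 + (Real.exp c - 1) * τ := by
    intro t c
    have hpt : ∀ ω, Real.exp (c * X t ω) = 1 + (Real.exp c - 1) * X t ω := by
      intro ω; rcases hX01 t ω with h | h <;> rw [h] <;> simp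
    show ∫ ω, Real.exp (c * X t ω) ∂P = _
    rw [integral_congr_ae (Filter.Eventually.of_forall hpt)]
    rw [integral_add (integrable_const 1) ((hXint t).const_mul _), integral_const,
      integral_const_mul, hXmean t]
    simp
  have hindep : iIndepFun X P :=
    (iIndep_eval θ).comp (fun _ => g) (fun _ => hgm)
  set Sf : (Fin Q → E) → ℝ := fun ω => ∑ t : Fin Q, X t ω with hSf
  have hSfsum : (∑ t : Fin Q, X t) = Sf := by
    funext ω; rw [Finset.sum_apply]
  have hSfm : Measurable Sf := Finset.measurable_sum Finset.univ fun t _ => hXm t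
  have hSf0 : ∀ ω, 0 ≤ Sf ω := fun ω => Finset.sum_nonneg fun t _ => hX0 t ω
  have hSfQ : ∀ ω, Sf ω ≤ Q := by
    intro ω
    calc Sf ω ≤ ∑ _t : Fin Q, (1:ℝ) := Finset.sum_le_sum fun t _ => hX1 t ω
      _ = Q := by simp
  have hSmgf : ∀ c : ℝ, mgf Sf P c = (1 + (Real.exp c - 1) * τ)^Q := by
    intro c
    rw [← hSfsum, iIndepFun.mgf_sum hindep hXm Finset.univ]
    simp_rw [hmgf]
    rw [Finset.prod_const, Finset.card_univ, Fintype.card_fin]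
  have hint : ∀ c : ℝ, Integrable (fun ω => Real.exp (c * Sf ω)) P := by
    intro c
    refine Integrable.mono' (integrable_const (Real.exp (|c| * Q)))
      ((hSfm.const_mul c).exp.aestronglyMeasurable) ?_
    refine Filter.Eventually.of_forall fun ω => ?_
    rw [Real.norm_eq_abs, abs_of_pos (Real.exp_pos _), Real.exp_le_exp]
    calc c * Sf ω ≤ |c| * Sf ω := mul_le_mul_of_nonneg_right (le_abs_self c) (hSf0 ω)
      _ ≤ |c| * Q := mul_le_mul_of_nonneg_left (hSfQ ω) (abs_nonneg c)
  have hQpos : (0:ℝ) < Q := by exact_mod_cast hQ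
  by_cases hcase : ε ≤ 1/2
  · set lam := 2 * ε with hlam
    have hlam0 : 0 < lam := by positivity
    have hlam1 : lam ≤ 1 := by rw [hlam]; linarith
    have hlamabs : |lam| ≤ 1 := by rw [abs_of_pos hlam0]; exact hlam1
    have hlamabs' : |(-lam)| ≤ 1 := by rw [abs_neg]; exact hlamabs
    -- the per-tail real bound
    have hbound : Real.exp (-(3 * ε^2) * Q) ≤ δ / 2 := by
      have hlog : 0 < Real.log (2 / δ) := by
        apply Real.log_pos
        rw [lt_div_iff₀ hδ.1]; nlinarith [hδ.2]
      have h1 : Real.log (2 / δ) ≤ 2 * ε^2 * Q := by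
        have h2e : (0:ℝ) < 2 * ε^2 := by positivity
        have hcopy := hQbound
        rw [div_mul_eq_mul_div, one_mul, div_le_iff₀ h2e] at hcopy
        nlinarith
      have h2 : -(3 * ε^2) * (Q:ℝ) ≤ - Real.log (2/δ) := by nlinarith
      calc Real.exp (-(3 * ε^2) * Q) ≤ Real.exp (- Real.log (2/δ)) := Real.exp_le_exp.mpr h2
        _ = δ / 2 := by
            rw [Real.exp_neg, Real.exp_log (div_pos two_pos hδ.1)]
            rw [inv_div]
    -- upper tail
    have hup : (P {ω | (Q:ℝ) * τ + 3 * ε * Q ≤ Sf ω}).toReal ≤ Real.exp (-(3 * ε^2) * Q) := by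
      refine (measure_ge_le_exp_mul_mgf ((Q:ℝ) * τ + 3 * ε * Q) hlam0.le (hint lam)).trans ?_
      rw [hSmgf lam]
      have hbase0 : (0:ℝ) ≤ 1 + (Real.exp lam - 1) * τ := by
        have h1 : (1:ℝ) ≤ Real.exp lam := Real.one_le_exp hlam0.le
        nlinarith
      have h1 : (1 + (Real.exp lam - 1) * τ)^Q ≤ Real.exp (lam * τ + (3/4) * lam^2)^Q :=
        pow_le_pow_left₀ hbase0 (bernoulli_mgf_bound hlamabs hτ0 hτ1) Q
      calc Real.exp (-lam * ((Q:ℝ) * τ + 3 * ε * Q)) * (1 + (Real.exp lam - 1) * τ)^Q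
          ≤ Real.exp (-lam * ((Q:ℝ) * τ + 3 * ε * Q)) * Real.exp (lam * τ + (3/4) * lam^2)^Q := by
            exact mul_le_mul_of_nonneg_left h1 (Real.exp_pos _).le
        _ = Real.exp (-lam * ((Q:ℝ) * τ + 3 * ε * Q) + Q * (lam * τ + (3/4) * lam^2)) := by
            rw [← Real.exp_nat_mul, ← Real.exp_add]
        _ = Real.exp (-(3 * ε^2) * Q) := by
            congr 1; rw [hlam]; ring
    -- lower tail
    have hlow : (P {ω | Sf ω ≤ (Q:ℝ) * τ - 3 * ε * Q}).toReal ≤ Real.exp (-(3 * ε^2) * Q) := by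
      have h0 := measure_le_le_exp_mul_mgf (μ := P) (X := Sf) ((Q:ℝ) * τ - 3 * ε * Q)
        (neg_nonpos.mpr hlam0.le) (hint (-lam))
      refine h0.trans ?_
      rw [hSmgf (-lam)]
      have hbase0 : (0:ℝ) ≤ 1 + (Real.exp (-lam) - 1) * τ := by
        have h1 : 0 < Real.exp (-lam) := Real.exp_pos _
        have h2 : Real.exp (-lam) ≤ 1 := Real.exp_le_one_iff.mpr (by linarith)
        nlinarith
      have h1 : (1 + (Real.exp (-lam) - 1) * τ)^Q ≤ Real.exp ((-lam) * τ + (3/4) * (-lam)^2)^Q :=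
        pow_le_pow_left₀ hbase0 (bernoulli_mgf_bound hlamabs' hτ0 hτ1) Q
      calc Real.exp (-(-lam) * ((Q:ℝ) * τ - 3 * ε * Q)) * (1 + (Real.exp (-lam) - 1) * τ)^Q
          ≤ Real.exp (-(-lam) * ((Q:ℝ) * τ - 3 * ε * Q))
              * Real.exp ((-lam) * τ + (3/4) * (-lam)^2)^Q := by
            exact mul_le_mul_of_nonneg_left h1 (Real.exp_pos _).le
        _ = Real.exp (-(-lam) * ((Q:ℝ) * τ - 3 * ε * Q)
              + Q * ((-lam) * τ + (3/4) * (-lam)^2)) := by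
            rw [← Real.exp_nat_mul, ← Real.exp_add]
        _ = Real.exp (-(3 * ε^2) * Q) := by
            congr 1; rw [hlam]; ring
    -- combine
    have hsub : {ω : Fin Q → E | 3 * ε < |(∑ t : Fin Q, g (ω t)) / (Q:ℝ) - τ|}
        ⊆ {ω | (Q:ℝ) * τ + 3 * ε * Q ≤ Sf ω} ∪ {ω | Sf ω ≤ (Q:ℝ) * τ - 3 * ε * Q} := by
      intro ω hω
      simp only [Set.mem_setOf_eq] at hω
      have hS : (∑ t : Fin Q, g (ω t)) = Sf ω := rfl
      rw [hS] at hω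
      rcases lt_abs.mp hω with h | h
      · left
        show (Q:ℝ) * τ + 3 * ε * Q ≤ Sf ω
        have h2 : (3 * ε + τ) * (Q:ℝ) < Sf ω :=
          (lt_div_iff₀ hQpos).mp (by linarith)
        nlinarith
      · right
        show Sf ω ≤ (Q:ℝ) * τ - 3 * ε * Q
        have h2 : Sf ω / (Q:ℝ) < τ - 3 * ε := by linarith
        have h3 : Sf ω < (τ - 3 * ε) * (Q:ℝ) := (div_lt_iff₀ hQpos).mp h2
        nlinarith
    refine (measure_mono hsub).trans ((measure_union_le _ _).trans ?_)
    have e1 : P {ω | (Q:ℝ) * τ + 3 * ε * Q ≤ Sf ω} ≤ ENNReal.ofReal (Real.exp (-(3 * ε^2) * Q)) := by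
      rw [← ENNReal.ofReal_toReal (measure_ne_top P _)]
      exact ENNReal.ofReal_le_ofReal hup
    have e2 : P {ω | Sf ω ≤ (Q:ℝ) * τ - 3 * ε * Q} ≤ ENNReal.ofReal (Real.exp (-(3 * ε^2) * Q)) := by
      rw [← ENNReal.ofReal_toReal (measure_ne_top P _)]
      exact ENNReal.ofReal_le_ofReal hlow
    refine (add_le_add e1 e2).trans ?_
    rw [← ENNReal.ofReal_add (Real.exp_pos _).le (Real.exp_pos _).le]
    apply ENNReal.ofReal_le_ofReal
    linarith [hδ.1]
  · -- ε > 1/2 : event is empty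
    push_neg at hcase
    have hempty : {ω : Fin Q → E | 3 * ε < |(∑ t : Fin Q, g (ω t)) / (Q:ℝ) - τ|} = ∅ := by
      ext ω
      simp only [Set.mem_setOf_eq, Set.mem_empty_iff_false, iff_false, not_lt]
      have hS : (∑ t : Fin Q, g (ω t)) = Sf ω := rfl
      rw [hS]
      have h1 : 0 ≤ Sf ω / Q := div_nonneg (hSf0 ω) hQpos.le
      have h2 : Sf ω / Q ≤ 1 := by
        rw [div_le_one hQpos]; exact hSfQ ω
      have : |Sf ω / Q - τ| ≤ 1 := by
        rw [abs_le]; constructor <;> linarith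
      linarith
    rw [hempty]
    simp


/-- **Concentration of the estimated bias `τ̂`.**  `E_L'` is a matching-like set of `Q`
directed edges, indexed by `t : Fin Q`: since no vertex appears twice as an origin nor
twice as a destination, the origin parameters are `Q` i.i.d. `[0,1]`-valued random
variables `p t` with common law `νp` (mean `μ_p = ∫ x dνp`), the destination
parameters are `Q` i.i.d. `[0,1]`-valued random variables `q t` with law `νq`
(mean `μ_q`), independent of the `p`'s, and conditionally on all parameters each label
`y_t` is independently `+1` with probability `(p t + q t)/2` (modeled by independent
uniform `[0,1]` thresholds `u t`, with `y_t = +1 ↔ u t < (p t + q t)/2`).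
With `τ̂ = (1/Q)·∑_t 1[y_t = +1]`, if `Q ≥ (1/(2ε²))·ln(2/δ)` then
`Pr(|τ̂ − (μ_p + μ_q)/2| > 3ε) ≤ 3δ`. -/
theorem tau_hat_concentration
    (Q : ℕ) (hQ : 1 ≤ Q)
    (νp νq : Measure ℝ) [IsProbabilityMeasure νp] [IsProbabilityMeasure νq]
    (hνp : νp (Set.Icc (0 : ℝ) 1) = 1) (hνq : νq (Set.Icc (0 : ℝ) 1) = 1)
    (ε δ : ℝ) (hε : 0 < ε) (hδ : δ ∈ Set.Ioo (0 : ℝ) 1)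
    (hQbound : (1 / (2 * ε ^ 2)) * Real.log (2 / δ) ≤ (Q : ℝ)) :
    ((Measure.pi fun _ : Fin Q => νp).prod
        ((Measure.pi fun _ : Fin Q => νq).prod
          (Measure.pi fun _ : Fin Q => volume.restrict (Set.Icc (0 : ℝ) 1))))
      {ω : (Fin Q → ℝ) × ((Fin Q → ℝ) × (Fin Q → ℝ)) |
        3 * ε < |(∑ t : Fin Q, if ω.2.2 t < (ω.1 t + ω.2.1 t) / 2 then (1 : ℝ) else 0)
            / (Q : ℝ) - ((∫ x, x ∂νp) + (∫ x, x ∂νq)) / 2|}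
      ≤ ENNReal.ofReal (3 * δ) := by
  classical
  set u := volume.restrict (Set.Icc (0:ℝ) 1) with hu
  have hpu : IsProbabilityMeasure u := ⟨by simp [hu, Real.volume_Icc]⟩
  set τ : ℝ := ((∫ x, x ∂νp) + (∫ x, x ∂νq)) / 2 with hτdef
  have hmp := mean_mem_Icc νp hνp
  have hmq := mean_mem_Icc νq hνq
  have hτ0 : 0 ≤ τ := by rw [hτdef]; have := hmp.1; have := hmq.1; linarith
  have hτ1 : τ ≤ 1 := by rw [hτdef]; have := hmp.2; have := hmq.2; linarith
  -- transfer to the pi measure over E := ℝ × ℝ × ℝ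
  have htransfer :
      ((Measure.pi fun _ : Fin Q => νp).prod
          ((Measure.pi fun _ : Fin Q => νq).prod
            (Measure.pi fun _ : Fin Q => u)))
        {ω : (Fin Q → ℝ) × ((Fin Q → ℝ) × (Fin Q → ℝ)) |
          3 * ε < |(∑ t : Fin Q, if ω.2.2 t < (ω.1 t + ω.2.1 t) / 2 then (1 : ℝ) else 0)
              / (Q : ℝ) - τ|}
      = (Measure.pi fun _ : Fin Q => νp.prod (νq.prod u))
        {ω : Fin Q → ℝ × ℝ × ℝ |
          3 * ε < |(∑ t : Fin Q, if (ω t).2.2 < ((ω t).1 + (ω t).2.1) / 2 then (1 : ℝ) else 0)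
              / (Q : ℝ) - τ|} := by
    have mp1 := measurePreserving_arrowProdEquivProdArrow ℝ (ℝ × ℝ) (Fin Q)
      (fun _ => νp) (fun _ => νq.prod u)
    have mp2 := (MeasurePreserving.id (Measure.pi fun _ : Fin Q => νp)).prod
      (measurePreserving_arrowProdEquivProdArrow ℝ ℝ (Fin Q) (fun _ => νq) (fun _ => u))
    have mp := mp2.comp mp1
    rw [← mp.map_eq]
    have mterm : ∀ t : Fin Q, Measurable
        (fun ω : (Fin Q → ℝ) × ((Fin Q → ℝ) × (Fin Q → ℝ)) =>
          if ω.2.2 t < (ω.1 t + ω.2.1 t) / 2 then (1:ℝ) else 0) := by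
      intro t
      exact Measurable.ite (measurableSet_lt (by fun_prop) (by fun_prop))
        measurable_const measurable_const
    have mf : Measurable (fun ω : (Fin Q → ℝ) × ((Fin Q → ℝ) × (Fin Q → ℝ)) =>
        |(∑ t : Fin Q, if ω.2.2 t < (ω.1 t + ω.2.1 t) / 2 then (1:ℝ) else 0) / (Q:ℝ) - τ|) := by
      apply Measurable.abs
      apply Measurable.sub _ measurable_const
      exact (Finset.measurable_sum Finset.univ fun t _ => mterm t).div_const _
    rw [Measure.map_apply mp.measurable (measurableSet_lt measurable_const mf)]
    rfl
  rw [htransfer]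
  -- apply the concentration lemma
  set g : ℝ × ℝ × ℝ → ℝ := fun e => if e.2.2 < (e.1 + e.2.1) / 2 then (1:ℝ) else 0 with hg
  have hgm : Measurable g := by
    exact Measurable.ite (measurableSet_lt (measurable_snd.snd)
      ((measurable_fst.add measurable_snd.fst).div_const 2)) measurable_const measurable_const
  have hg01 : ∀ e, g e = 0 ∨ g e = 1 := by
    intro e; rw [hg]; dsimp only; split_ifs
    · right; rfl
    · left; rfl
  have hτint : ∫ e, g e ∂(νp.prod (νq.prod u)) = τ := by
    have mS : MeasurableSet {e : ℝ × ℝ × ℝ | e.2.2 < (e.1 + e.2.1) / 2} :=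
      measurableSet_lt (measurable_snd.snd) ((measurable_fst.add measurable_snd.fst).div_const 2)
    have hgi : ∀ e, g e = Set.indicator {e : ℝ × ℝ × ℝ | e.2.2 < (e.1 + e.2.1) / 2}
        (fun _ => (1:ℝ)) e := by
      intro e
      by_cases h : e.2.2 < (e.1 + e.2.1) / 2 <;>
        simp [hg, Set.indicator_apply, h]
    rw [integral_congr_ae (Filter.Eventually.of_forall hgi)]
    rw [integral_indicator_const (1:ℝ) mS]
    rw [measureReal_def]
    rw [theta_set νp νq hνp hνq]
    rw [smul_eq_mul, mul_one, ENNReal.toReal_ofReal hτ0]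
  exact pi_bernoulli_concentration (νp.prod (νq.prod u)) g hgm hg01 Q hQ τ ε δ
    hτint hτ0 hτ1 hε hδ hQbound
end
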